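/- arXiv:1808.10303 — 2 statements merged into one kernel-verified Lean document; each statement's English description precedes it below -/
import Mathlib

section
/- Let K be a field with char K ≠ 2 and let 𝔤 be a finitely generated Lie algebra over K. Then the abelianization L(𝔤)/[L(𝔤), L(𝔤)] of the ideal L(𝔤) ⊆ χ(𝔤) is finite dimensional over K. Equivalently, if I denotes the two-sided associative ideal of U(𝔤) generated by the elements x² for x ∈ 𝔤, then the quotient Aug(U(𝔤))/I is finite dimensional, and L(𝔤)/[L(𝔤), L(𝔤)] ≅ Aug(U(𝔤))/I. -/
/- Formalization of a statement from "Weak commutativity for Lie algebras"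
   (arXiv:1808.10303). All Lie algebras are over a fixed field `K` with `char K ≠ 2`. -/

universe u v w

set_option linter.unusedVariables false
set_option maxHeartbeats 1000000
set_option synthInstance.maxHeartbeats 400000

section WeakCommutativity

variable (K : Type u) [Field K] (g : Type v) [LieRing g] [LieAlgebra K g]

/-- The image of `x ∈ g` (first copy) in the free Lie algebra on two copies of `g`. -/
noncomputable def ofl (x : g) : FreeLieAlgebra K (g ⊕ g) := FreeLieAlgebra.of K (Sum.inl x)

/-- The image of `xᵠ ∈ gᵠ` (second copy) in the free Lie algebra on two copies of `g`. -/
noncomputable def ofr (x : g) : FreeLieAlgebra K (g ⊕ g) := FreeLieAlgebra.of K (Sum.inr x)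

/-- Relators presenting `χ(g)` as a quotient of the free Lie algebra on the disjoint union of
two copies of (the underlying type of) `g`: the relations presenting the free Lie product
(coproduct) of `g` and its copy `gᵠ`, together with the weak commutativity relations
`⁅x, xᵠ⁆ = 0` for all `x ∈ g`. -/
def chiRelators : Set (FreeLieAlgebra K (g ⊕ g)) :=
  { z | (∃ x y : g, z = ofl K g (x + y) - ofl K g x - ofl K g y)
      ∨ (∃ (c : K) (x : g), z = ofl K g (c • x) - c • ofl K g x)
      ∨ (∃ x y : g, z = ofl K g ⁅x, y⁆ - ⁅ofl K g x, ofl K g y⁆)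
      ∨ (∃ x y : g, z = ofr K g (x + y) - ofr K g x - ofr K g y)
      ∨ (∃ (c : K) (x : g), z = ofr K g (c • x) - c • ofr K g x)
      ∨ (∃ x y : g, z = ofr K g ⁅x, y⁆ - ⁅ofr K g x, ofr K g y⁆)
      ∨ (∃ x : g, z = ⁅ofl K g x, ofr K g x⁆) }

/-- The ideal of relations defining `χ(g)`. -/
noncomputable def chiIdeal : LieIdeal K (FreeLieAlgebra K (g ⊕ g)) :=
  LieSubmodule.lieSpan K (FreeLieAlgebra K (g ⊕ g)) (chiRelators K g)

/-- Sidki's weak commutativity Lie algebra `χ(g)`: the quotient of the free Lie product of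
two isomorphic copies `g`, `gᵠ` of `g` by the ideal generated by the brackets `⁅x, xᵠ⁆`. -/
abbrev chi : Type (max u v) := FreeLieAlgebra K (g ⊕ g) ⧸ chiIdeal K g

/-- The canonical image of `x ∈ g` (first copy) in `χ(g)`. -/
noncomputable def chiι (x : g) : chi K g :=
  LieSubmodule.Quotient.mk (N := chiIdeal K g) (ofl K g x)

/-- The canonical image of `xᵠ` (the second copy of `x ∈ g`) in `χ(g)`. -/
noncomputable def chiψ (x : g) : chi K g :=
  LieSubmodule.Quotient.mk (N := chiIdeal K g) (ofr K g x)

/-- The ideal `L(g) ⊆ χ(g)`, generated by the elements `x - xᵠ` for `x ∈ g`. -/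
noncomputable def chiL : LieIdeal K (chi K g) :=
  LieSubmodule.lieSpan K (chi K g) (Set.range fun x : g => chiι K g x - chiψ K g x)

end WeakCommutativity

section LieAugmentation

attribute [local instance 100] LieRing.ofAssociativeRing

/-- The augmentation (counit) of the universal enveloping algebra, i.e. the unique algebra
homomorphism `U(h) → K` sending the image of `h` to `0`. -/
noncomputable def lieAugmentation (K : Type u) [Field K]
    (h : Type v) [LieRing h] [LieAlgebra K h] :
    UniversalEnvelopingAlgebra K h →ₐ[K] K :=
  UniversalEnvelopingAlgebra.lift K (0 : h →ₗ⁅K⁆ K)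

end LieAugmentation

namespace WCProof

attribute [local instance 100] LieRing.ofAssociativeRing

variable (K : Type u) [Field K] (g : Type v) [LieRing g] [LieAlgebra K g]

/-- The quotient map onto `chi` as a Lie algebra morphism. -/
noncomputable def chiπ : FreeLieAlgebra K (g ⊕ g) →ₗ⁅K⁆ chi K g where
  toLinearMap := (LieSubmodule.Quotient.mk' (chiIdeal K g)).toLinearMap
  map_lie' := by
    intro x y
    exact LieSubmodule.Quotient.mk_bracket (chiIdeal K g) x y

lemma chiπ_apply (z : FreeLieAlgebra K (g ⊕ g)) :
    chiπ K g z = LieSubmodule.Quotient.mk (N := chiIdeal K g) z := rfl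

lemma chiπ_rel {z : FreeLieAlgebra K (g ⊕ g)} (h : z ∈ chiRelators K g) :
    chiπ K g z = 0 := by
  rw [chiπ_apply]
  exact (LieSubmodule.Quotient.mk_eq_zero').mpr (LieSubmodule.subset_lieSpan h)

lemma chiι_add (x y : g) : chiι K g (x + y) = chiι K g x + chiι K g y := by
  have := chiπ_rel K g (Or.inl ⟨x, y, rfl⟩)
  rw [map_sub, map_sub, sub_sub, sub_eq_zero] at this
  exact this

lemma chiι_smul (c : K) (x : g) : chiι K g (c • x) = c • chiι K g x := by
  have := chiπ_rel K g (Or.inr (Or.inl ⟨c, x, rfl⟩))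
  rw [map_sub, map_smul, sub_eq_zero] at this
  exact this

lemma chiι_lie (x y : g) : chiι K g ⁅x, y⁆ = ⁅chiι K g x, chiι K g y⁆ := by
  have := chiπ_rel K g (Or.inr (Or.inr (Or.inl ⟨x, y, rfl⟩)))
  rw [map_sub, LieHom.map_lie, sub_eq_zero] at this
  exact this

lemma chiψ_add (x y : g) : chiψ K g (x + y) = chiψ K g x + chiψ K g y := by
  have := chiπ_rel K g (Or.inr (Or.inr (Or.inr (Or.inl ⟨x, y, rfl⟩))))
  rw [map_sub, map_sub, sub_sub, sub_eq_zero] at this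
  exact this

lemma chiψ_smul (c : K) (x : g) : chiψ K g (c • x) = c • chiψ K g x := by
  have := chiπ_rel K g (Or.inr (Or.inr (Or.inr (Or.inr (Or.inl ⟨c, x, rfl⟩)))))
  rw [map_sub, map_smul, sub_eq_zero] at this
  exact this

lemma chiψ_lie (x y : g) : chiψ K g ⁅x, y⁆ = ⁅chiψ K g x, chiψ K g y⁆ := by
  have := chiπ_rel K g (Or.inr (Or.inr (Or.inr (Or.inr (Or.inr (Or.inl ⟨x, y, rfl⟩))))))
  rw [map_sub, LieHom.map_lie, sub_eq_zero] at this
  exact this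

lemma chi_wc (x : g) : ⁅chiι K g x, chiψ K g x⁆ = 0 := by
  have := chiπ_rel K g (Or.inr (Or.inr (Or.inr (Or.inr (Or.inr (Or.inr ⟨x, rfl⟩))))))
  rw [LieHom.map_lie] at this
  exact this

lemma chi_polar (x y : g) : ⁅chiι K g x, chiψ K g y⁆ + ⁅chiι K g y, chiψ K g x⁆ = 0 := by
  have h := chi_wc K g (x + y)
  rw [chiι_add, chiψ_add, add_lie, lie_add, lie_add, chi_wc, chi_wc, zero_add, add_zero] at h
  exact h

/-- Polarized weak-commutativity: `⁅ψ x, ι y⁆ = ⁅ι x, ψ y⁆`. -/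
lemma chi_polar' (x y : g) : ⁅chiψ K g x, chiι K g y⁆ = ⁅chiι K g x, chiψ K g y⁆ := by
  have h2 := neg_eq_of_add_eq_zero_right (chi_polar K g y x)
  rw [lie_skew] at h2
  exact h2

/-- Induction principle for `chi`. -/
lemma chi_induction {p : chi K g → Prop}
    (hι : ∀ x, p (chiι K g x)) (hψ : ∀ x, p (chiψ K g x))
    (h0 : p 0)
    (hadd : ∀ a b, p a → p b → p (a + b))
    (hsmul : ∀ (c : K) a, p a → p (c • a))
    (hlie : ∀ a b, p a → p b → p ⁅a, b⁆) :
    ∀ z, p z := by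
  let S : LieSubalgebra K (chi K g) :=
    { carrier := setOf p
      add_mem' := fun ha hb => hadd _ _ ha hb
      zero_mem' := h0
      smul_mem' := fun c a ha => hsmul c a ha
      lie_mem' := fun ha hb => hlie _ _ ha hb }
  let f : g ⊕ g → S := fun a =>
    Sum.casesOn a (fun x => ⟨chiι K g x, hι x⟩) (fun x => ⟨chiψ K g x, hψ x⟩)
  let F : FreeLieAlgebra K (g ⊕ g) →ₗ⁅K⁆ S := FreeLieAlgebra.lift K f
  have key : S.incl.comp F = chiπ K g := by
    have := (FreeLieAlgebra.lift K (L := chi K g)).symm.injective (a₁ := S.incl.comp F)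
      (a₂ := chiπ K g)
    apply this
    rw [FreeLieAlgebra.lift_symm_apply, FreeLieAlgebra.lift_symm_apply]
    funext a
    cases a with
    | inl x =>
        show S.incl (F (FreeLieAlgebra.of K (Sum.inl x))) = chiπ K g (FreeLieAlgebra.of K (Sum.inl x))
        rw [show F (FreeLieAlgebra.of K (Sum.inl x)) = f (Sum.inl x) from FreeLieAlgebra.lift_of_apply f _]
        rfl
    | inr x =>
        show S.incl (F (FreeLieAlgebra.of K (Sum.inr x))) = chiπ K g (FreeLieAlgebra.of K (Sum.inr x))
        rw [show F (FreeLieAlgebra.of K (Sum.inr x)) = f (Sum.inr x) from FreeLieAlgebra.lift_of_apply f _]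
        rfl
  intro z
  obtain ⟨w, rfl⟩ := LieSubmodule.Quotient.surjective_mk' (chiIdeal K g) z
  have : LieSubmodule.Quotient.mk' (chiIdeal K g) w = chiπ K g w := rfl
  rw [this, ← key]
  exact (F w).2


/-- The Lie ideal `γ₃`-like ideal of `g` generated by double brackets. -/
noncomputable def gam : LieIdeal K g :=
  LieSubmodule.lieSpan K g {z | ∃ x y w : g, z = ⁅⁅x, y⁆, w⁆}

/-- `P = g ⧸ γ`. -/
abbrev Pq : Type v := g ⧸ gam K g

noncomputable def prP : g →ₗ⁅K⁆ Pq K g where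
  toLinearMap := (LieSubmodule.Quotient.mk' (gam K g)).toLinearMap
  map_lie' := by intro x y; exact LieSubmodule.Quotient.mk_bracket (gam K g) x y

lemma prP_surjective : Function.Surjective (prP K g) :=
  LieSubmodule.Quotient.surjective_mk' (gam K g)

lemma gam_lie_lie_mem (x y w : g) : ⁅⁅x, y⁆, w⁆ ∈ gam K g :=
  LieSubmodule.subset_lieSpan ⟨x, y, w, rfl⟩

lemma lie_lie_prP (x y : g) (m : Pq K g) : ⁅⁅x, y⁆, m⁆ = 0 := by
  obtain ⟨z, rfl⟩ := prP_surjective K g m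
  have : (⁅⁅x,y⁆, prP K g z⁆ : Pq K g) = prP K g ⁅⁅x,y⁆, z⁆ := rfl
  rw [this]
  have hz : (⁅⁅x,y⁆, z⁆ : g) ∈ gam K g := gam_lie_lie_mem K g x y z
  exact (LieSubmodule.Quotient.mk_eq_zero').mpr hz

lemma lie_lie_prP' (x y : g) (m : Pq K g) : ⁅x, ⁅y, m⁆⁆ = (0 : Pq K g) := by
  obtain ⟨z, rfl⟩ := prP_surjective K g m
  have h1 : (⁅y, prP K g z⁆ : Pq K g) = prP K g ⁅y, z⁆ := rfl
  rw [h1]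
  have h2 : (⁅x, prP K g ⁅y,z⁆⁆ : Pq K g) = prP K g ⁅x, ⁅y, z⁆⁆ := rfl
  rw [h2]
  have hz : (⁅x, ⁅y,z⁆⁆ : g) ∈ gam K g := by
    have h3 : (⁅x, ⁅y,z⁆⁆ : g) = -⁅⁅y,z⁆, x⁆ := (lie_skew x ⁅y,z⁆).symm
    rw [h3]
    exact neg_mem (gam_lie_lie_mem K g y z x)
  exact (LieSubmodule.Quotient.mk_eq_zero').mpr hz

/-- Semidirect product `g ⋉ P` with the halved adjoint action. -/
def Tsd : Type v := g × Pq K g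

noncomputable instance : AddCommGroup (Tsd K g) := inferInstanceAs (AddCommGroup (g × Pq K g))
noncomputable instance : Module K (Tsd K g) := inferInstanceAs (Module K (g × Pq K g))

noncomputable instance : LieRing (Tsd K g) where
  bracket a b := (⁅a.1, b.1⁆, (2 : K)⁻¹ • ⁅a.1, b.2⁆ - (2 : K)⁻¹ • ⁅b.1, a.2⁆)
  add_lie a b c := by
    show (_, _) = (_, _)
    ext
    · show ⁅a.1 + b.1, c.1⁆ = ⁅a.1, c.1⁆ + ⁅b.1, c.1⁆; rw [add_lie]
    · show (2:K)⁻¹ • ⁅a.1 + b.1, c.2⁆ - (2:K)⁻¹ • ⁅c.1, a.2 + b.2⁆ =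
        ((2:K)⁻¹ • ⁅a.1, c.2⁆ - (2:K)⁻¹ • ⁅c.1, a.2⁆) + ((2:K)⁻¹ • ⁅b.1, c.2⁆ - (2:K)⁻¹ • ⁅c.1, b.2⁆)
      rw [add_lie, lie_add, smul_add, smul_add]
      abel
  lie_add a b c := by
    show (_, _) = (_, _)
    ext
    · show ⁅a.1, b.1 + c.1⁆ = ⁅a.1, b.1⁆ + ⁅a.1, c.1⁆; rw [lie_add]
    · show (2:K)⁻¹ • ⁅a.1, b.2 + c.2⁆ - (2:K)⁻¹ • ⁅b.1 + c.1, a.2⁆ =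
        ((2:K)⁻¹ • ⁅a.1, b.2⁆ - (2:K)⁻¹ • ⁅b.1, a.2⁆) + ((2:K)⁻¹ • ⁅a.1, c.2⁆ - (2:K)⁻¹ • ⁅c.1, a.2⁆)
      rw [lie_add, add_lie, smul_add, smul_add]
      abel
  lie_self a := by
    show (_, _) = (_, _)
    ext
    · show ⁅a.1, a.1⁆ = 0; rw [lie_self]
    · show (2:K)⁻¹ • ⁅a.1, a.2⁆ - (2:K)⁻¹ • ⁅a.1, a.2⁆ = 0; rw [sub_self]
  leibniz_lie a b c := by
    show (_, _) = (_, _)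
    ext
    · show ⁅a.1, ⁅b.1, c.1⁆⁆ = ⁅⁅a.1, b.1⁆, c.1⁆ + ⁅b.1, ⁅a.1, c.1⁆⁆; rw [leibniz_lie]
    · show (2:K)⁻¹ • ⁅a.1, (2:K)⁻¹ • ⁅b.1, c.2⁆ - (2:K)⁻¹ • ⁅c.1, b.2⁆⁆
          - (2:K)⁻¹ • ⁅⁅b.1, c.1⁆, a.2⁆ =
        ((2:K)⁻¹ • ⁅⁅a.1, b.1⁆, c.2⁆ - (2:K)⁻¹ • ⁅c.1, (2:K)⁻¹ • ⁅a.1, b.2⁆ - (2:K)⁻¹ • ⁅b.1, a.2⁆⁆)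
          + ((2:K)⁻¹ • ⁅b.1, (2:K)⁻¹ • ⁅a.1, c.2⁆ - (2:K)⁻¹ • ⁅c.1, a.2⁆⁆
              - (2:K)⁻¹ • ⁅⁅a.1, c.1⁆, b.2⁆)
      simp only [lie_sub, lie_smul, lie_lie_prP, lie_lie_prP', smul_zero, sub_zero, zero_sub,
        smul_neg, neg_zero, add_zero, sub_self, zero_add]

noncomputable instance : LieAlgebra K (Tsd K g) where
  lie_smul c a b := by
    show (_, _) = (_, _)
    ext
    · show ⁅a.1, c • b.1⁆ = c • ⁅a.1, b.1⁆; rw [lie_smul]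
    · show (2:K)⁻¹ • ⁅a.1, c • b.2⁆ - (2:K)⁻¹ • ⁅c • b.1, a.2⁆ =
        c • ((2:K)⁻¹ • ⁅a.1, b.2⁆ - (2:K)⁻¹ • ⁅b.1, a.2⁆)
      rw [lie_smul, smul_lie, smul_sub, smul_comm c, smul_comm c]

lemma Tsd_bracket (a b : Tsd K g) :
    ⁅a, b⁆ = ((⁅a.1, b.1⁆ : g), (2 : K)⁻¹ • ⁅a.1, b.2⁆ - (2 : K)⁻¹ • ⁅b.1, a.2⁆) := rfl


/-! ### The map `F : χ(g) → g ⋉ P` and the `Q = χ/L'` side -/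

noncomputable def fT : g ⊕ g → Tsd K g := fun a =>
  Sum.casesOn a (fun x => ((x : g), (0 : Pq K g))) (fun x => (x, prP K g x))

noncomputable def F0 : FreeLieAlgebra K (g ⊕ g) →ₗ⁅K⁆ Tsd K g :=
  FreeLieAlgebra.lift K (fT K g)

lemma Tsd_ext : ∀ (a b : Tsd K g), a.1 = b.1 → a.2 = b.2 → a = b :=
  fun (a b : g × Pq K g) h1 h2 => Prod.ext h1 h2

lemma F0_ofl (x : g) : F0 K g (ofl K g x) = (x, 0) := FreeLieAlgebra.lift_of_apply _ _

lemma F0_ofr (x : g) : F0 K g (ofr K g x) = (x, prP K g x) := FreeLieAlgebra.lift_of_apply _ _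

lemma prP_lie_apply (x y : g) : (⁅x, prP K g y⁆ : Pq K g) = prP K g ⁅x, y⁆ := rfl

lemma F0_rel (h2 : (2 : K) ≠ 0) {z : FreeLieAlgebra K (g ⊕ g)} (hz : z ∈ chiRelators K g) :
    F0 K g z = 0 := by
  have hc : (2:K)⁻¹ + (2:K)⁻¹ = 1 := by
    field_simp
    norm_num
  rcases hz with ⟨x, y, rfl⟩ | ⟨c, x, rfl⟩ | ⟨x, y, rfl⟩ | ⟨x, y, rfl⟩ | ⟨c, x, rfl⟩
    | ⟨x, y, rfl⟩ | ⟨x, rfl⟩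
  · rw [map_sub, map_sub, F0_ofl, F0_ofl, F0_ofl]
    refine Tsd_ext K g _ _ ?_ ?_
    · show x + y - x - y = 0; abel
    · show (0 : Pq K g) - 0 - 0 = 0; abel
  · rw [map_sub, map_smul, F0_ofl, F0_ofl]
    refine Tsd_ext K g _ _ ?_ ?_
    · show c • x - c • x = 0; abel
    · show (0 : Pq K g) - c • 0 = 0; rw [smul_zero, sub_zero]
  · rw [map_sub, LieHom.map_lie, Tsd_bracket, F0_ofl, F0_ofl, F0_ofl]
    refine Tsd_ext K g _ _ ?_ ?_
    · show (⁅x, y⁆ : g) - ⁅x, y⁆ = 0; abel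
    · show (0 : Pq K g) - ((2:K)⁻¹ • ⁅x, (0 : Pq K g)⁆ - (2:K)⁻¹ • ⁅y, (0 : Pq K g)⁆) = 0
      rw [lie_zero, lie_zero, smul_zero, sub_zero, zero_sub, neg_zero]
  · rw [map_sub, map_sub, F0_ofr, F0_ofr, F0_ofr]
    refine Tsd_ext K g _ _ ?_ ?_
    · show x + y - x - y = 0; abel
    · show prP K g (x + y) - prP K g x - prP K g y = 0
      rw [map_add]; abel
  · rw [map_sub, map_smul, F0_ofr, F0_ofr]
    refine Tsd_ext K g _ _ ?_ ?_
    · show c • x - c • x = 0; abel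
    · show prP K g (c • x) - c • prP K g x = 0
      rw [map_smul, sub_self]
  · rw [map_sub, LieHom.map_lie, Tsd_bracket, F0_ofr, F0_ofr, F0_ofr]
    refine Tsd_ext K g _ _ ?_ ?_
    · show (⁅x, y⁆ : g) - ⁅x, y⁆ = 0; abel
    · show prP K g ⁅x, y⁆ -
        ((2:K)⁻¹ • ⁅x, prP K g y⁆ - (2:K)⁻¹ • ⁅y, prP K g x⁆) = 0
      rw [prP_lie_apply, prP_lie_apply]
      have : prP K g ⁅y, x⁆ = - prP K g ⁅x, y⁆ := by
        rw [show (⁅y, x⁆ : g) = -⁅x, y⁆ from (lie_skew y x).symm, map_neg]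
      rw [this, smul_neg, sub_neg_eq_add, ← add_smul, hc, one_smul, sub_self]
  · rw [LieHom.map_lie, Tsd_bracket, F0_ofl, F0_ofr]
    refine Tsd_ext K g _ _ ?_ ?_
    · show (⁅x, x⁆ : g) = 0; rw [lie_self]
    · show (2:K)⁻¹ • ⁅x, prP K g x⁆ - (2:K)⁻¹ • ⁅x, (0 : Pq K g)⁆ = 0
      rw [prP_lie_apply, lie_self, map_zero, smul_zero, lie_zero, smul_zero, sub_zero]

lemma chiIdeal_le_kerF0 (h2 : (2 : K) ≠ 0) : chiIdeal K g ≤ (F0 K g).ker := by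
  rw [chiIdeal, LieSubmodule.lieSpan_le]
  intro z hz
  exact LieHom.mem_ker.mpr (F0_rel K g h2 hz)

/-- The induced linear map `χ(g) → g ⋉ P`. -/
noncomputable def F1 (h2 : (2 : K) ≠ 0) : chi K g →ₗ[K] Tsd K g :=
  Submodule.liftQ (chiIdeal K g).toSubmodule (F0 K g).toLinearMap
    (fun z hz => LinearMap.mem_ker.mpr (LieHom.mem_ker.mp (chiIdeal_le_kerF0 K g h2 hz)))

lemma F1_mk (h2 : (2 : K) ≠ 0) (w : FreeLieAlgebra K (g ⊕ g)) :
    F1 K g h2 (chiπ K g w) = F0 K g w := rfl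

lemma F1_bracket (h2 : (2 : K) ≠ 0) (a b : chi K g) :
    F1 K g h2 ⁅a, b⁆ = ⁅F1 K g h2 a, F1 K g h2 b⁆ := by
  obtain ⟨u, rfl⟩ := LieSubmodule.Quotient.surjective_mk' (chiIdeal K g) a
  obtain ⟨v, rfl⟩ := LieSubmodule.Quotient.surjective_mk' (chiIdeal K g) b
  have h1 : (LieSubmodule.Quotient.mk' (chiIdeal K g)) u = chiπ K g u := rfl
  have h2' : (LieSubmodule.Quotient.mk' (chiIdeal K g)) v = chiπ K g v := rfl
  rw [h1, h2', ← LieHom.map_lie (chiπ K g), F1_mk, F1_mk, F1_mk, LieHom.map_lie]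

lemma F1_chiι (h2 : (2 : K) ≠ 0) (x : g) : F1 K g h2 (chiι K g x) = (x, 0) := by
  have : chiι K g x = chiπ K g (ofl K g x) := rfl
  rw [this, F1_mk, F0_ofl]

lemma F1_chiψ (h2 : (2 : K) ≠ 0) (x : g) : F1 K g h2 (chiψ K g x) = (x, prP K g x) := by
  have : chiψ K g x = chiπ K g (ofr K g x) := rfl
  rw [this, F1_mk, F0_ofr]

/-! ### The quotient `Q = χ / ⁅L,L⁆` -/

noncomputable abbrev Lp : LieIdeal K (chi K g) := ⁅chiL K g, chiL K g⁆

noncomputable abbrev Qq : Type (max u v) := chi K g ⧸ Lp K g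

noncomputable def qπ : chi K g →ₗ⁅K⁆ Qq K g where
  toLinearMap := (LieSubmodule.Quotient.mk' (Lp K g)).toLinearMap
  map_lie' := by intro x y; exact LieSubmodule.Quotient.mk_bracket (Lp K g) x y

/-- `x - xᵠ` as a linear map `g →ₗ χ(g)`. -/
noncomputable def Dl : g →ₗ[K] chi K g where
  toFun x := chiι K g x - chiψ K g x
  map_add' x y := by
    show chiι K g (x + y) - chiψ K g (x + y) =
      (chiι K g x - chiψ K g x) + (chiι K g y - chiψ K g y)
    rw [chiι_add, chiψ_add]; abel
  map_smul' c x := by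
    show chiι K g (c • x) - chiψ K g (c • x) = c • (chiι K g x - chiψ K g x)
    rw [chiι_smul, chiψ_smul, smul_sub]

lemma Dl_apply (x : g) : Dl K g x = chiι K g x - chiψ K g x := rfl

lemma Dl_mem_chiL (x : g) : Dl K g x ∈ chiL K g :=
  LieSubmodule.subset_lieSpan ⟨x, rfl⟩

lemma qDD (x y : g) : qπ K g ⁅Dl K g x, Dl K g y⁆ = 0 := by
  have : (⁅Dl K g x, Dl K g y⁆ : chi K g) ∈ Lp K g :=
    LieSubmodule.lie_mem_lie (Dl_mem_chiL K g x) (Dl_mem_chiL K g y)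
  exact (LieSubmodule.Quotient.mk_eq_zero').mpr this

lemma qDD' (x y : g) : ⁅qπ K g (Dl K g x), qπ K g (Dl K g y)⁆ = 0 := by
  rw [← LieHom.map_lie, qDD]

lemma chi_E (x y : g) : ⁅Dl K g x, chiι K g y⁆ = ⁅chiι K g x, Dl K g y⁆ := by
  rw [Dl_apply, Dl_apply, sub_lie, lie_sub, chi_polar']

lemma Dl_lie_expand (x y : g) :
    Dl K g ⁅x, y⁆ =
      ⁅chiι K g x, Dl K g y⁆ + ⁅Dl K g x, chiι K g y⁆ - ⁅Dl K g x, Dl K g y⁆ := by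
  simp only [Dl_apply]
  rw [chiι_lie, chiψ_lie]
  rw [lie_sub, sub_lie, sub_lie, lie_sub, lie_sub]
  abel

lemma key1 (x y : g) :
    qπ K g (Dl K g ⁅x, y⁆) = (2 : K) • ⁅qπ K g (chiι K g x), qπ K g (Dl K g y)⁆ := by
  have qE : ⁅qπ K g (Dl K g x), qπ K g (chiι K g y)⁆
      = ⁅qπ K g (chiι K g x), qπ K g (Dl K g y)⁆ := by
    rw [← LieHom.map_lie, ← LieHom.map_lie, chi_E]
  rw [Dl_lie_expand, map_sub, map_add, LieHom.map_lie, LieHom.map_lie,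
    LieHom.map_lie, qDD', sub_zero, qE, two_smul]

lemma triple0 (h2 : (2 : K) ≠ 0) (x y z : g) : qπ K g (Dl K g ⁅⁅x, y⁆, z⁆) = 0 := by
  set X : Qq K g := ⁅qπ K g (chiι K g ⁅x, y⁆), qπ K g (Dl K g z)⁆ with hX
  have hB : qπ K g (Dl K g ⁅⁅x, y⁆, z⁆) = (2 : K) • X := key1 K g ⁅x, y⁆ z
  have hA : qπ K g (Dl K g ⁅⁅x, y⁆, z⁆) = (4 : K) • X := by
    have e : (⁅⁅x, y⁆, z⁆ : g) = ⁅x, ⁅y, z⁆⁆ - ⁅y, ⁅x, z⁆⁆ := lie_lie x y z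
    rw [e, map_sub, map_sub, key1 K g x ⁅y, z⁆, key1 K g y ⁅x, z⁆,
      key1 K g y z, key1 K g x z, lie_smul, lie_smul, smul_smul, smul_smul, ← smul_sub]
    have e2 : (⁅qπ K g (chiι K g x), ⁅qπ K g (chiι K g y), qπ K g (Dl K g z)⁆⁆ : Qq K g)
        - ⁅qπ K g (chiι K g y), ⁅qπ K g (chiι K g x), qπ K g (Dl K g z)⁆⁆
        = ⁅⁅qπ K g (chiι K g x), qπ K g (chiι K g y)⁆, qπ K g (Dl K g z)⁆ :=
      (lie_lie _ _ _).symm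
    rw [e2, hX, chiι_lie, LieHom.map_lie]
    norm_num
  have h40 : ((4 : K) - (2 : K)) • X = 0 := by
    rw [sub_smul, ← hA, ← hB, sub_self]
  have h42 : (4 : K) - (2 : K) = 2 := by norm_num
  rw [h42] at h40
  have hX0 : X = 0 := by
    rcases smul_eq_zero.mp h40 with h | h
    · exact absurd h h2
    · exact h
  rw [hB, hX0, smul_zero]

/-- The linear map `δ₀ : g → Q`. -/
noncomputable def delta0 : g →ₗ[K] Qq K g :=
  ((qπ K g).toLinearMap).comp (Dl K g)

lemma delta0_apply (x : g) : delta0 K g x = qπ K g (Dl K g x) := rfl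

lemma gam_le_ker_delta0 (h2 : (2 : K) ≠ 0) :
    ∀ x ∈ gam K g, delta0 K g x = 0 := by
  intro x hx
  let N : LieIdeal K g :=
    { toSubmodule := LinearMap.ker (delta0 K g)
      lie_mem := by
        intro w t ht
        have ht' : delta0 K g t = 0 := ht
        have hk := key1 K g w t
        show delta0 K g ⁅w, t⁆ = 0
        rw [delta0_apply, hk, ← delta0_apply, ht', lie_zero, smul_zero]
      }
  have hle : gam K g ≤ N := by
    rw [gam, LieSubmodule.lieSpan_le]
    rintro z ⟨a, b, c, rfl⟩
    show delta0 K g ⁅⁅a, b⁆, c⁆ = 0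
    rw [delta0_apply]
    exact triple0 K g h2 a b c
  exact hle hx


/-! ### `δ̄ : P → Q`, its range and injectivity -/

noncomputable def deltaBar (h2 : (2 : K) ≠ 0) : Pq K g →ₗ[K] Qq K g :=
  Submodule.liftQ (gam K g).toSubmodule (delta0 K g)
    (fun x hx => LinearMap.mem_ker.mpr (gam_le_ker_delta0 K g h2 x hx))

lemma deltaBar_prP (h2 : (2 : K) ≠ 0) (x : g) :
    deltaBar K g h2 (prP K g x) = delta0 K g x := rfl

/-- Bracketing with any element of `χ` preserves the range of `δ₀`. -/
lemma lie_range_delta0 (h2 : (2 : K) ≠ 0) :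
    ∀ (a : chi K g), ∀ s ∈ LinearMap.range (delta0 K g),
      ⁅qπ K g a, s⁆ ∈ LinearMap.range (delta0 K g) := by
  have hι : ∀ (x : g), ∀ s ∈ LinearMap.range (delta0 K g),
      ⁅qπ K g (chiι K g x), s⁆ ∈ LinearMap.range (delta0 K g) := by
    rintro x _ ⟨y, rfl⟩
    refine ⟨(2 : K)⁻¹ • ⁅x, y⁆, ?_⟩
    rw [map_smul, delta0_apply, key1, smul_smul, inv_mul_cancel₀ h2, one_smul]
    rfl
  refine chi_induction K g (p := fun a => ∀ s ∈ LinearMap.range (delta0 K g),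
    ⁅qπ K g a, s⁆ ∈ LinearMap.range (delta0 K g)) hι ?_ ?_ ?_ ?_ ?_
  · -- ψ
    rintro x _ ⟨y, rfl⟩
    have hψ : qπ K g (chiψ K g x) = qπ K g (chiι K g x) - delta0 K g x := by
      rw [delta0_apply, ← map_sub]
      congr 1
      rw [Dl_apply]
      abel
    rw [hψ, sub_lie]
    have h1 : (⁅delta0 K g x, delta0 K g y⁆ : Qq K g) = 0 := qDD' K g x y
    rw [h1, sub_zero]
    exact hι x _ ⟨y, rfl⟩
  · intro s _; rw [map_zero, zero_lie]; exact zero_mem _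
  · intro a b ha hb s hs
    rw [map_add, add_lie]
    exact add_mem (ha s hs) (hb s hs)
  · intro c a ha s hs
    rw [map_smul, smul_lie]
    exact Submodule.smul_mem _ _ (ha s hs)
  · intro a b ha hb s hs
    rw [LieHom.map_lie, lie_lie]
    exact sub_mem (ha _ (hb s hs)) (hb _ (ha s hs))

lemma chiL_mem_range (h2 : (2 : K) ≠ 0) :
    ∀ z ∈ chiL K g, qπ K g z ∈ LinearMap.range (delta0 K g) := by
  intro z hz
  let N2 : LieIdeal K (chi K g) :=
    { toSubmodule := Submodule.comap (qπ K g).toLinearMap (LinearMap.range (delta0 K g))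
      lie_mem := by
        intro w t ht
        have ht' : qπ K g t ∈ LinearMap.range (delta0 K g) := ht
        show qπ K g ⁅w, t⁆ ∈ LinearMap.range (delta0 K g)
        rw [LieHom.map_lie]
        exact lie_range_delta0 K g h2 w _ ht' }
  have hle : chiL K g ≤ N2 := by
    rw [chiL, LieSubmodule.lieSpan_le]
    rintro _ ⟨x, rfl⟩
    show qπ K g (chiι K g x - chiψ K g x) ∈ LinearMap.range (delta0 K g)
    exact ⟨x, rfl⟩
  exact hle hz

/-- `V₁`, the image of `L` in `Q`. -/
noncomputable def V1 : Submodule K (Qq K g) :=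
  Submodule.map (LieSubmodule.toSubmodule (Lp K g)).mkQ
    (LieSubmodule.toSubmodule (chiL K g))

lemma range_deltaBar_eq_V1 (h2 : (2 : K) ≠ 0) :
    LinearMap.range (deltaBar K g h2) = V1 K g := by
  rw [deltaBar, Submodule.range_liftQ]
  apply le_antisymm
  · rintro _ ⟨x, rfl⟩
    exact ⟨Dl K g x, Dl_mem_chiL K g x, rfl⟩
  · rintro _ ⟨z, hz, rfl⟩
    exact chiL_mem_range K g h2 z hz

lemma chiL_fst_F1 (h2 : (2 : K) ≠ 0) :
    ∀ z ∈ chiL K g, (F1 K g h2 z).1 = 0 := by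
  intro z hz
  let N3 : LieIdeal K (chi K g) :=
    { toSubmodule := LinearMap.ker ((LinearMap.fst K g (Pq K g)).comp (F1 K g h2))
      lie_mem := by
        intro w t ht
        have ht' : (F1 K g h2 t).1 = 0 := ht
        show (F1 K g h2 ⁅w, t⁆).1 = 0
        rw [F1_bracket, Tsd_bracket]
        show (⁅(F1 K g h2 w).1, (F1 K g h2 t).1⁆ : g) = 0
        rw [ht', lie_zero] }
  have hle : chiL K g ≤ N3 := by
    rw [chiL, LieSubmodule.lieSpan_le]
    rintro _ ⟨x, rfl⟩
    show (F1 K g h2 (chiι K g x - chiψ K g x)).1 = 0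
    rw [map_sub, F1_chiι, F1_chiψ]
    show x - x = 0
    rw [sub_self]
  exact hle hz

lemma Lp_le_kerF1 (h2 : (2 : K) ≠ 0) :
    ∀ z ∈ Lp K g, F1 K g h2 z = 0 := by
  intro z hz
  let N4 : LieIdeal K (chi K g) :=
    { toSubmodule := LinearMap.ker (F1 K g h2)
      lie_mem := by
        intro w t ht
        have ht' : F1 K g h2 t = 0 := ht
        show F1 K g h2 ⁅w, t⁆ = 0
        rw [F1_bracket, ht', lie_zero] }
  have hle : Lp K g ≤ N4 := by
    rw [LieSubmodule.lie_le_iff]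
    intro a ha b hb
    show F1 K g h2 ⁅a, b⁆ = 0
    rw [F1_bracket]
    refine Tsd_ext K g _ _ ?_ ?_
    · show (⁅(F1 K g h2 a).1, (F1 K g h2 b).1⁆ : g) = 0
      rw [chiL_fst_F1 K g h2 a ha, zero_lie]
    · show (2:K)⁻¹ • ⁅(F1 K g h2 a).1, (F1 K g h2 b).2⁆
        - (2:K)⁻¹ • ⁅(F1 K g h2 b).1, (F1 K g h2 a).2⁆ = 0
      rw [chiL_fst_F1 K g h2 a ha, chiL_fst_F1 K g h2 b hb, zero_lie, zero_lie,
        smul_zero, sub_self]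
  exact hle hz

/-- Second projection of the semidirect product, as a linear map. -/
noncomputable def sndT : Tsd K g →ₗ[K] Pq K g where
  toFun a := a.2
  map_add' a b := rfl
  map_smul' c a := rfl

noncomputable def Fbar (h2 : (2 : K) ≠ 0) : Qq K g →ₗ[K] Tsd K g :=
  Submodule.liftQ (Lp K g).toSubmodule (F1 K g h2) (fun z hz => LinearMap.mem_ker.mpr (Lp_le_kerF1 K g h2 z hz))

noncomputable def ell (h2 : (2 : K) ≠ 0) : Qq K g →ₗ[K] Pq K g :=
  (sndT K g).comp (Fbar K g h2)

lemma ell_delta0 (h2 : (2 : K) ≠ 0) (x : g) :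
    ell K g h2 (delta0 K g x) = - prP K g x := by
  have h1 : delta0 K g x = Submodule.Quotient.mk (Dl K g x) := rfl
  have h2' : ell K g h2 (Submodule.Quotient.mk (Dl K g x)) = (F1 K g h2 (Dl K g x)).2 := rfl
  rw [h1, h2', Dl_apply, map_sub, F1_chiι, F1_chiψ]
  show (0 : Pq K g) - prP K g x = - prP K g x
  rw [zero_sub]

lemma deltaBar_injective (h2 : (2 : K) ≠ 0) : Function.Injective (deltaBar K g h2) := by
  have key : ∀ p : Pq K g, ell K g h2 (deltaBar K g h2 p) = -p := by
    intro p
    obtain ⟨x, rfl⟩ := prP_surjective K g p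
    rw [deltaBar_prP, ell_delta0]
  intro a b hab
  have := key a
  rw [hab, key b] at this
  exact (neg_injective this).symm

/-- The first isomorphism: `P ≃ V₁`. -/
noncomputable def equiv1 (h2 : (2 : K) ≠ 0) : Pq K g ≃ₗ[K] V1 K g :=
  (LinearEquiv.ofInjective (deltaBar K g h2) (deltaBar_injective K g h2)).trans
    (LinearEquiv.ofEq _ _ (range_deltaBar_eq_V1 K g h2))


/-! ### `P` is finite dimensional when `g` is finitely generated -/

lemma Pq_finiteDimensional
    (hfg : ∃ s : Finset g, LieSubalgebra.lieSpan K g (s : Set g) = ⊤) :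
    FiniteDimensional K (Pq K g) := by
  classical
  obtain ⟨s, hs⟩ := hfg
  set t : Set g := (s : Set g) ∪ Set.image2 (fun a b : g => ⁅a, b⁆) (s : Set g) (s : Set g)
    with ht
  have htfin : t.Finite := (s.finite_toSet).union (Set.Finite.image2 _ s.finite_toSet
    s.finite_toSet)
  -- brackets of elements of `t` stay in `span t ⊔ gam`
  have hbase : ∀ u ∈ t, ∀ v ∈ t,
      (⁅u, v⁆ : g) ∈ Submodule.span K t ⊔ (gam K g).toSubmodule := by
    intro u hu v hv
    rcases hu with hu | ⟨a, ha, b, hb, rfl⟩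
    · rcases hv with hv | ⟨c, hc, d, hd, rfl⟩
      · exact Submodule.mem_sup_left
          (Submodule.subset_span (Or.inr ⟨u, hu, v, hv, rfl⟩))
      · apply Submodule.mem_sup_right
        have he : (⁅u, ⁅c, d⁆⁆ : g) = -⁅⁅c, d⁆, u⁆ := (lie_skew u ⁅c, d⁆).symm
        rw [he]
        exact neg_mem (gam_lie_lie_mem K g c d u)
    · exact Submodule.mem_sup_right (gam_lie_lie_mem K g a b v)
  have key : ∀ x ∈ Submodule.span K t, ∀ y ∈ Submodule.span K t,
      (⁅x, y⁆ : g) ∈ Submodule.span K t ⊔ (gam K g).toSubmodule := by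
    intro x hx y hy
    induction hx, hy using Submodule.span_induction₂ with
    | mem_mem u v hu hv => exact hbase u hu v hv
    | zero_left y hy => rw [zero_lie]; exact zero_mem _
    | zero_right x hx => rw [lie_zero]; exact zero_mem _
    | add_left x y z hx hy hz h1 h2 => rw [add_lie]; exact add_mem h1 h2
    | add_right x y z hx hy hz h1 h2 => rw [lie_add]; exact add_mem h1 h2
    | smul_left r x y hx hy h1 => rw [smul_lie]; exact Submodule.smul_mem _ _ h1
    | smul_right r x y hx hy h1 => rw [lie_smul]; exact Submodule.smul_mem _ _ h1
  let W : LieSubalgebra K g :=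
    { toSubmodule := Submodule.span K t ⊔ (gam K g).toSubmodule
      lie_mem' := by
        intro x y hx hy
        obtain ⟨x1, hx1, x2, hx2, rfl⟩ := Submodule.mem_sup.mp hx
        obtain ⟨y1, hy1, y2, hy2, rfl⟩ := Submodule.mem_sup.mp hy
        rw [add_lie, lie_add, lie_add]
        have m1 : (⁅x1, y1⁆ : g) ∈ Submodule.span K t ⊔ (gam K g).toSubmodule :=
          key x1 hx1 y1 hy1
        have m2 : (⁅x1, y2⁆ : g) ∈ gam K g := (gam K g).lie_mem hy2
        have m3 : (⁅x2, y1⁆ : g) ∈ gam K g := by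
          have he : (⁅x2, y1⁆ : g) = -⁅y1, x2⁆ := (lie_skew x2 y1).symm
          rw [he]
          exact neg_mem ((gam K g).lie_mem hx2)
        have m4 : (⁅x2, y2⁆ : g) ∈ gam K g := (gam K g).lie_mem hy2
        exact add_mem (add_mem m1 (Submodule.mem_sup_right m2))
          (add_mem (Submodule.mem_sup_right m3) (Submodule.mem_sup_right m4)) }
  have hW : ∀ x : g, x ∈ Submodule.span K t ⊔ (gam K g).toSubmodule := by
    intro x
    have hx : x ∈ LieSubalgebra.lieSpan K g (s : Set g) := by rw [hs]; exact trivial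
    have hle : LieSubalgebra.lieSpan K g (s : Set g) ≤ W := by
      rw [LieSubalgebra.lieSpan_le]
      intro u hu
      exact Submodule.mem_sup_left (Submodule.subset_span (Or.inl hu))
    exact hle hx
  have hspan : Submodule.span K ((prP K g) '' t) = ⊤ := by
    rw [eq_top_iff]
    rintro p -
    obtain ⟨x, rfl⟩ := prP_surjective K g p
    obtain ⟨a, haa, c, hc, rfl⟩ := Submodule.mem_sup.mp (hW x)
    rw [map_add]
    have hc0 : prP K g c = 0 := (LieSubmodule.Quotient.mk_eq_zero').mpr hc
    rw [hc0, add_zero]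
    have : prP K g a ∈ Submodule.map (prP K g).toLinearMap (Submodule.span K t) :=
      ⟨a, haa, rfl⟩
    rw [Submodule.map_span] at this
    exact this
  exact ⟨Submodule.fg_def.mpr ⟨(prP K g) '' t, htfin.image _, hspan⟩⟩


/-! ### The universal enveloping algebra side -/

noncomputable abbrev UU : Type (max u v) := UniversalEnvelopingAlgebra K g

noncomputable def II : Submodule K (UU K g) :=
  Submodule.span K { z : UniversalEnvelopingAlgebra K g |
    ∃ (a b : UniversalEnvelopingAlgebra K g) (x : g),
      z = a * (UniversalEnvelopingAlgebra.ι K x * UniversalEnvelopingAlgebra.ι K x) * b }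

lemma II_mul_left (u : UU K g) {z : UU K g} (hz : z ∈ II K g) : u * z ∈ II K g := by
  induction hz using Submodule.span_induction with
  | mem w hw =>
      obtain ⟨a, b, x, rfl⟩ := hw
      exact Submodule.subset_span ⟨u * a, b, x, by noncomm_ring⟩
  | zero => rw [mul_zero]; exact zero_mem _
  | add p q hp hq ihp ihq => rw [mul_add]; exact add_mem ihp ihq
  | smul c p hp ihp => rw [mul_smul_comm]; exact Submodule.smul_mem _ _ ihp

lemma II_mul_right (u : UU K g) {z : UU K g} (hz : z ∈ II K g) : z * u ∈ II K g := by
  induction hz using Submodule.span_induction with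
  | mem w hw =>
      obtain ⟨a, b, x, rfl⟩ := hw
      exact Submodule.subset_span ⟨a, b * u, x, by noncomm_ring⟩
  | zero => rw [zero_mul]; exact zero_mem _
  | add p q hp hq ihp ihq => rw [add_mul]; exact add_mem ihp ihq
  | smul c p hp ihp => rw [smul_mul_assoc]; exact Submodule.smul_mem _ _ ihp

lemma sq_mem_II (x : g) :
    UniversalEnvelopingAlgebra.ι K x * UniversalEnvelopingAlgebra.ι K x ∈ II K g :=
  Submodule.subset_span ⟨1, 1, x, by rw [one_mul, mul_one]⟩

lemma anti_mem_II (x y : g) :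
    UniversalEnvelopingAlgebra.ι K x * UniversalEnvelopingAlgebra.ι K y
      + UniversalEnvelopingAlgebra.ι K y * UniversalEnvelopingAlgebra.ι K x ∈ II K g := by
  have hid : UniversalEnvelopingAlgebra.ι K x * UniversalEnvelopingAlgebra.ι K y
      + UniversalEnvelopingAlgebra.ι K y * UniversalEnvelopingAlgebra.ι K x
      = UniversalEnvelopingAlgebra.ι K (x + y) * UniversalEnvelopingAlgebra.ι K (x + y)
        - UniversalEnvelopingAlgebra.ι K x * UniversalEnvelopingAlgebra.ι K x
        - UniversalEnvelopingAlgebra.ι K y * UniversalEnvelopingAlgebra.ι K y := by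
    rw [map_add]
    noncomm_ring
  rw [hid]
  exact sub_mem (sub_mem (sq_mem_II K g (x + y)) (sq_mem_II K g x)) (sq_mem_II K g y)

lemma ι_lie (x y : g) :
    UniversalEnvelopingAlgebra.ι K ⁅x, y⁆
      = UniversalEnvelopingAlgebra.ι K x * UniversalEnvelopingAlgebra.ι K y
        - UniversalEnvelopingAlgebra.ι K y * UniversalEnvelopingAlgebra.ι K x := by
  rw [LieHom.map_lie, LieRing.of_associative_ring_bracket]

lemma triple_mem_II (x y z : g) :
    UniversalEnvelopingAlgebra.ι K ⁅⁅x, y⁆, z⁆ ∈ II K g := by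
  set a := UniversalEnvelopingAlgebra.ι K x with ha
  set b := UniversalEnvelopingAlgebra.ι K y with hb
  set c := UniversalEnvelopingAlgebra.ι K z with hc
  have hid : UniversalEnvelopingAlgebra.ι K ⁅⁅x, y⁆, z⁆
      = a * (c * b + b * c) + (c * b + b * c) * a
        - ((c * a + a * c) * b + b * (c * a + a * c)) := by
    rw [ι_lie, ι_lie, ← ha, ← hb, ← hc]
    noncomm_ring
  rw [hid]
  have h1 : (c * b + b * c : UU K g) ∈ II K g := anti_mem_II K g z y
  have h2 : (c * a + a * c : UU K g) ∈ II K g := anti_mem_II K g z x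
  exact sub_mem (add_mem (II_mul_left K g a h1) (II_mul_right K g a h1))
    (add_mem (II_mul_right K g b h2) (II_mul_left K g b h2))

/-- The subspace `K·1 + ι(g) + I` of `U(g)`. -/
noncomputable def Wu : Submodule K (UU K g) :=
  (Submodule.span K {(1 : UU K g)} ⊔ LinearMap.range (UniversalEnvelopingAlgebra.ι K
    (L := g)).toLinearMap) ⊔ II K g

lemma one_mem_Wu : (1 : UU K g) ∈ Wu K g :=
  Submodule.mem_sup_left (Submodule.mem_sup_left (Submodule.subset_span rfl))

lemma ι_mem_Wu (x : g) : UniversalEnvelopingAlgebra.ι K x ∈ Wu K g :=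
  Submodule.mem_sup_left (Submodule.mem_sup_right ⟨x, rfl⟩)

lemma II_le_Wu : II K g ≤ Wu K g := le_sup_right

lemma ι_mul_ι_mem_Wu (h2 : (2 : K) ≠ 0) (x y : g) :
    UniversalEnvelopingAlgebra.ι K x * UniversalEnvelopingAlgebra.ι K y ∈ Wu K g := by
  have hsum : UniversalEnvelopingAlgebra.ι K ⁅x, y⁆
      + (UniversalEnvelopingAlgebra.ι K x * UniversalEnvelopingAlgebra.ι K y
        + UniversalEnvelopingAlgebra.ι K y * UniversalEnvelopingAlgebra.ι K x)
      = (2 : K) • (UniversalEnvelopingAlgebra.ι K x * UniversalEnvelopingAlgebra.ι K y) := by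
    rw [ι_lie, two_smul]
    abel
  have hxy : UniversalEnvelopingAlgebra.ι K x * UniversalEnvelopingAlgebra.ι K y
      = (2 : K)⁻¹ • (UniversalEnvelopingAlgebra.ι K ⁅x, y⁆
        + (UniversalEnvelopingAlgebra.ι K x * UniversalEnvelopingAlgebra.ι K y
          + UniversalEnvelopingAlgebra.ι K y * UniversalEnvelopingAlgebra.ι K x)) := by
    rw [hsum, smul_smul, inv_mul_cancel₀ h2, one_smul]
  rw [hxy]
  exact Submodule.smul_mem _ _ (add_mem (ι_mem_Wu K g ⁅x, y⁆) (II_le_Wu K g (anti_mem_II K g x y)))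

lemma Wu_mul_mem (h2 : (2 : K) ≠ 0) :
    ∀ a ∈ Wu K g, ∀ b ∈ Wu K g, a * b ∈ Wu K g := by
  intro a ha b hb
  obtain ⟨p, hp, i, hi, rfl⟩ := Submodule.mem_sup.mp ha
  obtain ⟨o, ho, v, hv, rfl⟩ := Submodule.mem_sup.mp hp
  obtain ⟨k, rfl⟩ := Submodule.mem_span_singleton.mp ho
  obtain ⟨p', hp', i', hi', rfl⟩ := Submodule.mem_sup.mp hb
  obtain ⟨o', ho', v', hv', rfl⟩ := Submodule.mem_sup.mp hp'
  obtain ⟨k', rfl⟩ := Submodule.mem_span_singleton.mp ho'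
  obtain ⟨x, rfl⟩ := hv
  obtain ⟨x', rfl⟩ := hv'
  have hII : ∀ w ∈ II K g, w ∈ Wu K g := fun w hw => II_le_Wu K g hw
  have m11 : (k • (1 : UU K g)) * (k' • (1 : UU K g)) ∈ Wu K g := by
    rw [smul_mul_assoc, mul_smul_comm, mul_one, smul_smul]
    exact Submodule.smul_mem _ _ (one_mem_Wu K g)
  have m12 : (k • (1 : UU K g)) * UniversalEnvelopingAlgebra.ι K x' ∈ Wu K g := by
    rw [smul_mul_assoc, one_mul]
    exact Submodule.smul_mem _ _ (ι_mem_Wu K g x')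
  have m13 : (k • (1 : UU K g)) * i' ∈ Wu K g := by
    rw [smul_mul_assoc, one_mul]
    exact Submodule.smul_mem _ _ (hII _ hi')
  have m21 : UniversalEnvelopingAlgebra.ι K x * (k' • (1 : UU K g)) ∈ Wu K g := by
    rw [mul_smul_comm, mul_one]
    exact Submodule.smul_mem _ _ (ι_mem_Wu K g x)
  have m22 : UniversalEnvelopingAlgebra.ι K x * UniversalEnvelopingAlgebra.ι K x' ∈ Wu K g :=
    ι_mul_ι_mem_Wu K g h2 x x'
  have m23 : UniversalEnvelopingAlgebra.ι K x * i' ∈ Wu K g :=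
    hII _ (II_mul_left K g _ hi')
  have m31 : i * (k' • (1 : UU K g)) ∈ Wu K g := by
    rw [mul_smul_comm, mul_one]
    exact Submodule.smul_mem _ _ (hII _ hi)
  have m32 : i * UniversalEnvelopingAlgebra.ι K x' ∈ Wu K g :=
    hII _ (II_mul_right K g _ hi)
  have m33 : i * i' ∈ Wu K g := hII _ (II_mul_left K g _ hi')
  simp only [add_mul, mul_add]
  repeat' apply add_mem
  all_goals first
    | exact m11 | exact m12 | exact m13 | exact m21 | exact m22 | exact m23
    | exact m31 | exact m32 | exact m33

/-- `U(g) = K·1 + ι(g) + I`. -/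
lemma mem_Wu (h2 : (2 : K) ≠ 0) (u : UU K g) : u ∈ Wu K g := by
  let SA : Subalgebra K (UU K g) :=
    Submodule.toSubalgebra (Wu K g) (one_mem_Wu K g)
      (fun a b ha hb => Wu_mul_mem K g h2 a ha b hb)
  let ιS : g →ₗ⁅K⁆ SA :=
    { toFun := fun x => ⟨UniversalEnvelopingAlgebra.ι K x, ι_mem_Wu K g x⟩
      map_add' := fun x y => Subtype.ext (by
        show UniversalEnvelopingAlgebra.ι K (x + y) = _
        rw [map_add]; rfl)
      map_smul' := fun c x => Subtype.ext (by
        show UniversalEnvelopingAlgebra.ι K (c • x) = _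
        rw [map_smul]; rfl)
      map_lie' := fun {x y} => Subtype.ext (by
        show UniversalEnvelopingAlgebra.ι K ⁅x, y⁆ = _
        rw [ι_lie]
        rfl) }
  let E := UniversalEnvelopingAlgebra.lift K ιS
  have key : SA.val.comp E = AlgHom.id K (UU K g) := by
    apply UniversalEnvelopingAlgebra.hom_ext
    apply LieHom.ext
    intro x
    show SA.val (E (UniversalEnvelopingAlgebra.ι K x)) = UniversalEnvelopingAlgebra.ι K x
    rw [show E (UniversalEnvelopingAlgebra.ι K x) = ιS x from
      UniversalEnvelopingAlgebra.lift_ι_apply K ιS x]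
    rfl
  have : SA.val (E u) = u := by
    have := AlgHom.congr_fun key u
    simpa using this
  rw [← this]
  exact (E u).2

lemma aug_ι (x : g) : lieAugmentation K g (UniversalEnvelopingAlgebra.ι K x) = 0 := by
  rw [lieAugmentation, UniversalEnvelopingAlgebra.lift_ι_apply]
  rfl

lemma aug_II {z : UU K g} (hz : z ∈ II K g) : lieAugmentation K g z = 0 := by
  induction hz using Submodule.span_induction with
  | mem w hw =>
      obtain ⟨a, b, x, rfl⟩ := hw
      rw [map_mul, map_mul, map_mul, aug_ι]
      simp
  | zero => rw [map_zero]
  | add p q hp hq ihp ihq => rw [map_add, ihp, ihq, add_zero]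
  | smul c p hp ihp => rw [map_smul, ihp, smul_zero]


/-! ### The algebra `A = K ⊕ P` with product `m * n = ½⁅m,n⁆` -/

lemma Pq_lie_lie (m n p : Pq K g) : ⁅⁅m, n⁆, p⁆ = 0 := by
  obtain ⟨x, rfl⟩ := prP_surjective K g m
  obtain ⟨y, rfl⟩ := prP_surjective K g n
  obtain ⟨z, rfl⟩ := prP_surjective K g p
  rw [← LieHom.map_lie, ← LieHom.map_lie]
  exact (LieSubmodule.Quotient.mk_eq_zero').mpr (gam_lie_lie_mem K g x y z)

lemma Pq_lie_lie' (m n p : Pq K g) : ⁅m, ⁅n, p⁆⁆ = 0 := by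
  rw [show (⁅m, ⁅n, p⁆⁆ : Pq K g) = -⁅⁅n, p⁆, m⁆ from (lie_skew _ _).symm, Pq_lie_lie, neg_zero]

def Phalf : Type v := Pq K g

/-- Identity map `Pq → Phalf`. -/
def ofP : Pq K g → Phalf K g := fun m => m

/-- Identity map `Phalf → Pq`. -/
def toP : Phalf K g → Pq K g := fun m => m

noncomputable instance : AddCommGroup (Phalf K g) := inferInstanceAs (AddCommGroup (Pq K g))
noncomputable instance : Module K (Phalf K g) := inferInstanceAs (Module K (Pq K g))

noncomputable instance : NonUnitalRing (Phalf K g) :=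
  { (inferInstance : AddCommGroup (Phalf K g)) with
    mul := fun m n => ofP K g ((2 : K)⁻¹ • ⁅toP K g m, toP K g n⁆)
    left_distrib := fun a b c => by
      show (2 : K)⁻¹ • ⁅toP K g a, toP K g b + toP K g c⁆
        = (2 : K)⁻¹ • ⁅toP K g a, toP K g b⁆ + (2 : K)⁻¹ • ⁅toP K g a, toP K g c⁆
      rw [lie_add, smul_add]
    right_distrib := fun a b c => by
      show (2 : K)⁻¹ • ⁅toP K g a + toP K g b, toP K g c⁆
        = (2 : K)⁻¹ • ⁅toP K g a, toP K g c⁆ + (2 : K)⁻¹ • ⁅toP K g b, toP K g c⁆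
      rw [add_lie, smul_add]
    zero_mul := fun a => by
      show (2 : K)⁻¹ • ⁅(0 : Pq K g), toP K g a⁆ = (0 : Pq K g)
      rw [zero_lie, smul_zero]
    mul_zero := fun a => by
      show (2 : K)⁻¹ • ⁅toP K g a, (0 : Pq K g)⁆ = (0 : Pq K g)
      rw [lie_zero, smul_zero]
    mul_assoc := fun a b c => by
      show (2 : K)⁻¹ • ⁅(2 : K)⁻¹ • ⁅toP K g a, toP K g b⁆, toP K g c⁆
        = (2 : K)⁻¹ • ⁅toP K g a, (2 : K)⁻¹ • ⁅toP K g b, toP K g c⁆⁆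
      rw [smul_lie, lie_smul, Pq_lie_lie, Pq_lie_lie', smul_zero, smul_zero] }

lemma ofP_mul (a b : Pq K g) :
    ofP K g a * ofP K g b = ofP K g ((2 : K)⁻¹ • ⁅a, b⁆) := rfl

noncomputable instance : SMulCommClass K (Phalf K g) (Phalf K g) where
  smul_comm c m n := by
    show c • ((2 : K)⁻¹ • ⁅toP K g m, toP K g n⁆)
      = (2 : K)⁻¹ • ⁅toP K g m, c • toP K g n⁆
    rw [lie_smul, smul_comm]

noncomputable instance : IsScalarTower K (Phalf K g) (Phalf K g) where
  smul_assoc c m n := by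
    show (2 : K)⁻¹ • ⁅c • toP K g m, toP K g n⁆
      = c • ((2 : K)⁻¹ • ⁅toP K g m, toP K g n⁆)
    rw [smul_lie, smul_comm]

/-- The Lie algebra morphism `g → K ⊕ P`. -/
noncomputable def fP (h2 : (2 : K) ≠ 0) : g →ₗ⁅K⁆ Unitization K (Phalf K g) where
  toFun x := Unitization.inr (ofP K g (prP K g x))
  map_add' x y := by
    show Unitization.inr (ofP K g (prP K g (x + y))) = _
    rw [map_add]
    exact Unitization.inr_add K _ _
  map_smul' c x := by
    show Unitization.inr (ofP K g (prP K g (c • x))) = _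
    rw [map_smul]
    exact Unitization.inr_smul K _ _
  map_lie' := by
    intro x y
    show Unitization.inr (ofP K g (prP K g ⁅x, y⁆)) = ⁅_, _⁆
    rw [LieRing.of_associative_ring_bracket]
    rw [← Unitization.inr_mul, ← Unitization.inr_mul, ← Unitization.inr_sub]
    congr 1
    rw [ofP_mul, ofP_mul]
    show (prP K g ⁅x, y⁆ : Pq K g)
      = (2 : K)⁻¹ • ⁅prP K g x, prP K g y⁆ - (2 : K)⁻¹ • ⁅prP K g y, prP K g x⁆
    rw [show (⁅prP K g y, prP K g x⁆ : Pq K g) = -⁅prP K g x, prP K g y⁆ from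
      (lie_skew _ _).symm, smul_neg, sub_neg_eq_add, ← add_smul]
    have hc : (2:K)⁻¹ + (2:K)⁻¹ = 1 := by
      field_simp
      norm_num
    rw [hc, one_smul, LieHom.map_lie]

/-- The algebra morphism `Ψ : U(g) → K ⊕ P`. -/
noncomputable def Psi (h2 : (2 : K) ≠ 0) :
    UniversalEnvelopingAlgebra K g →ₐ[K] Unitization K (Phalf K g) :=
  UniversalEnvelopingAlgebra.lift K (fP K g h2)

lemma Psi_ι (h2 : (2 : K) ≠ 0) (x : g) :
    Psi K g h2 (UniversalEnvelopingAlgebra.ι K x)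
      = Unitization.inr (ofP K g (prP K g x)) :=
  UniversalEnvelopingAlgebra.lift_ι_apply K (fP K g h2) x

lemma Psi_II (h2 : (2 : K) ≠ 0) {z : UU K g} (hz : z ∈ II K g) : Psi K g h2 z = 0 := by
  induction hz using Submodule.span_induction with
  | mem w hw =>
      obtain ⟨a, b, x, rfl⟩ := hw
      rw [map_mul, map_mul, map_mul, Psi_ι, ← Unitization.inr_mul, ofP_mul]
      have hz : ((2 : K)⁻¹ • ⁅prP K g x, prP K g x⁆ : Pq K g) = 0 := by
        rw [lie_self, smul_zero]
      rw [hz]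
      show Psi K g h2 a * Unitization.inr (ofP K g 0) * Psi K g h2 b = 0
      have h0 : ofP K g 0 = 0 := rfl
      rw [h0, Unitization.inr_zero, mul_zero, zero_mul]
  | zero => rw [map_zero]
  | add p q hp hq ihp ihq => rw [map_add, ihp, ihq, add_zero]
  | smul c p hp ihp => rw [map_smul, ihp, smul_zero]

/-! ### `V₂ = Aug/I` and the second isomorphism -/

noncomputable def V2 : Submodule K (UU K g ⧸ II K g) :=
  Submodule.map (II K g).mkQ (LinearMap.ker (lieAugmentation K g).toLinearMap)

lemma gam_ι_II : ∀ x ∈ gam K g, UniversalEnvelopingAlgebra.ι K x ∈ II K g := by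
  intro x hx
  let N5 : LieIdeal K g :=
    { toSubmodule := Submodule.comap (UniversalEnvelopingAlgebra.ι K
        (L := g)).toLinearMap (II K g)
      lie_mem := by
        intro w t ht
        have ht' : UniversalEnvelopingAlgebra.ι K t ∈ II K g := ht
        show UniversalEnvelopingAlgebra.ι K ⁅w, t⁆ ∈ II K g
        rw [ι_lie]
        exact sub_mem (II_mul_left K g _ ht') (II_mul_right K g _ ht') }
  have hle : gam K g ≤ N5 := by
    rw [gam, LieSubmodule.lieSpan_le]
    rintro _ ⟨a, b, c, rfl⟩
    show UniversalEnvelopingAlgebra.ι K ⁅⁅a, b⁆, c⁆ ∈ II K g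
    exact triple_mem_II K g a b c
  exact hle hx

noncomputable def delta2 : Pq K g →ₗ[K] (UU K g ⧸ II K g) :=
  Submodule.liftQ (gam K g).toSubmodule
    ((II K g).mkQ.comp (UniversalEnvelopingAlgebra.ι K (L := g)).toLinearMap)
    (by
      intro x hx
      have : UniversalEnvelopingAlgebra.ι K x ∈ II K g := gam_ι_II K g x hx
      rw [LinearMap.mem_ker]
      show (II K g).mkQ (UniversalEnvelopingAlgebra.ι K x) = 0
      rw [Submodule.mkQ_apply]
      exact (Submodule.Quotient.mk_eq_zero _).mpr this)

lemma delta2_prP (x : g) :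
    delta2 K g (prP K g x) = (II K g).mkQ (UniversalEnvelopingAlgebra.ι K x) := rfl

/-- `toP` as a linear map. -/
noncomputable def toPL : Phalf K g →ₗ[K] Pq K g where
  toFun := toP K g
  map_add' _ _ := rfl
  map_smul' _ _ := rfl

noncomputable def Psibar (h2 : (2 : K) ≠ 0) :
    (UU K g ⧸ II K g) →ₗ[K] Unitization K (Phalf K g) :=
  Submodule.liftQ (II K g) (Psi K g h2).toLinearMap (fun z hz => LinearMap.mem_ker.mpr (Psi_II K g h2 hz))

noncomputable def ell2 (h2 : (2 : K) ≠ 0) : (UU K g ⧸ II K g) →ₗ[K] Pq K g :=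
  (toPL K g).comp ((Unitization.sndHom K K (Phalf K g)).comp (Psibar K g h2))

lemma ell2_delta2 (h2 : (2 : K) ≠ 0) (x : g) :
    ell2 K g h2 (delta2 K g (prP K g x)) = prP K g x := by
  rw [delta2_prP]
  have h1 : (II K g).mkQ (UniversalEnvelopingAlgebra.ι K x)
      = Submodule.Quotient.mk (UniversalEnvelopingAlgebra.ι K x) := rfl
  rw [h1]
  show toPL K g ((Unitization.sndHom K K (Phalf K g))
    (Psi K g h2 (UniversalEnvelopingAlgebra.ι K x))) = prP K g x
  rw [Psi_ι]
  rfl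

lemma delta2_injective (h2 : (2 : K) ≠ 0) : Function.Injective (delta2 K g) := by
  intro a b hab
  obtain ⟨x, rfl⟩ := prP_surjective K g a
  obtain ⟨y, rfl⟩ := prP_surjective K g b
  have := congrArg (ell2 K g h2) hab
  rw [ell2_delta2, ell2_delta2] at this
  exact this

lemma range_delta2_eq_V2 (h2 : (2 : K) ≠ 0) :
    LinearMap.range (delta2 K g) = V2 K g := by
  apply le_antisymm
  · rintro _ ⟨p, rfl⟩
    obtain ⟨x, rfl⟩ := prP_surjective K g p
    rw [delta2_prP]
    refine ⟨UniversalEnvelopingAlgebra.ι K x, ?_, rfl⟩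
    show lieAugmentation K g (UniversalEnvelopingAlgebra.ι K x) = 0
    exact aug_ι K g x
  · rintro _ ⟨u, hu, rfl⟩
    have hu' : lieAugmentation K g u = 0 := hu
    obtain ⟨p, hp, i, hi, rfl⟩ := Submodule.mem_sup.mp (mem_Wu K g h2 u)
    obtain ⟨o, ho, v, hv, rfl⟩ := Submodule.mem_sup.mp hp
    obtain ⟨k, rfl⟩ := Submodule.mem_span_singleton.mp ho
    obtain ⟨x, rfl⟩ := hv
    simp only [LieHom.coe_toLinearMap] at hu' ⊢
    -- the scalar part must vanish
    have hk : k = 0 := by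
      rw [map_add, map_add, map_smul, map_one, aug_ι K g x, aug_II K g hi,
        add_zero, add_zero] at hu'
      simpa using hu'
    subst hk
    rw [zero_smul, zero_add]
    have hmk : (II K g).mkQ (UniversalEnvelopingAlgebra.ι K x + i)
        = (II K g).mkQ (UniversalEnvelopingAlgebra.ι K x) := by
      rw [map_add]
      have : (II K g).mkQ i = 0 := by
        rw [Submodule.mkQ_apply]
        exact (Submodule.Quotient.mk_eq_zero _).mpr hi
      rw [this, add_zero]
    rw [hmk]
    exact ⟨prP K g x, rfl⟩

/-- The second isomorphism: `P ≃ V₂`. -/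
noncomputable def equiv2 (h2 : (2 : K) ≠ 0) : Pq K g ≃ₗ[K] V2 K g :=
  (LinearEquiv.ofInjective (delta2 K g) (delta2_injective K g h2)).trans
    (LinearEquiv.ofEq _ _ (range_delta2_eq_V2 K g h2))

end WCProof

/-- If `g` is finitely generated, then the abelianization `L(g)/[L(g), L(g)]`
is finite dimensional; equivalently, writing `I` for the two-sided associative ideal of
`U(g)` generated by the squares `x²` (`x ∈ g`), the quotient `Aug(U(g))/I` is finite
dimensional, and `L(g)/[L(g), L(g)] ≅ Aug(U(g))/I` as `K`-vector spaces. -/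
theorem chi_L_abelianization_finiteDimensional
    (K : Type u) [Field K] (hchar : ringChar K ≠ 2)
    (g : Type v) [LieRing g] [LieAlgebra K g]
    (hfg : ∃ s : Finset g, LieSubalgebra.lieSpan K g (s : Set g) = ⊤) :
    FiniteDimensional K
        ↥(Submodule.map
            (LieSubmodule.toSubmodule (⁅chiL K g, chiL K g⁆ : LieIdeal K (chi K g))).mkQ
            (LieSubmodule.toSubmodule (chiL K g))) ∧
      FiniteDimensional K
        ↥(Submodule.map
            (Submodule.span K { z : UniversalEnvelopingAlgebra K g |
                ∃ (a b : UniversalEnvelopingAlgebra K g) (x : g),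
                  z = a * (UniversalEnvelopingAlgebra.ι K x *
                    UniversalEnvelopingAlgebra.ι K x) * b }).mkQ
            (LinearMap.ker (lieAugmentation K g).toLinearMap)) ∧
      Nonempty
        (↥(Submodule.map
            (LieSubmodule.toSubmodule (⁅chiL K g, chiL K g⁆ : LieIdeal K (chi K g))).mkQ
            (LieSubmodule.toSubmodule (chiL K g))) ≃ₗ[K]
          ↥(Submodule.map
            (Submodule.span K { z : UniversalEnvelopingAlgebra K g |
                ∃ (a b : UniversalEnvelopingAlgebra K g) (x : g),
                  z = a * (UniversalEnvelopingAlgebra.ι K x *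
                    UniversalEnvelopingAlgebra.ι K x) * b }).mkQ
            (LinearMap.ker (lieAugmentation K g).toLinearMap))) := by
  have h2 : (2 : K) ≠ 0 := Ring.two_ne_zero hchar
  haveI hP : FiniteDimensional K (WCProof.Pq K g) := WCProof.Pq_finiteDimensional K g hfg
  have e1 : WCProof.Pq K g ≃ₗ[K] WCProof.V1 K g := WCProof.equiv1 K g h2
  have e2 : WCProof.Pq K g ≃ₗ[K] WCProof.V2 K g := WCProof.equiv2 K g h2
  refine ⟨e1.finiteDimensional, e2.finiteDimensional, ⟨e1.symm.trans e2⟩⟩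
end

section
/- Let K be a field with char K ≠ 2 and let 𝔤 be a Lie algebra over K that can be generated by two elements. Then R(𝔤) = 0. -/
/- Formalization of a statement from "Weak commutativity for Lie algebras"
   (arXiv:1808.10303). All Lie algebras are over a fixed field `K` with `char K ≠ 2`. -/

universe u v w

set_option linter.unusedVariables false

section WeakCommutativity

variable (K : Type u) [Field K] (g : Type v) [LieRing g] [LieAlgebra K g]

/-- The ideal `R(g) = ⁅g, L(g), gᵠ⁆ ⊆ χ(g)`, generated by the triple brackets
`⁅x, ⁅ℓ, yᵠ⁆⁆` for `x, y ∈ g` and `ℓ ∈ L(g)`. -/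
noncomputable def chiR : LieIdeal K (chi K g) :=
  LieSubmodule.lieSpan K (chi K g)
    { z | ∃ (x y : g) (ℓ : chi K g), ℓ ∈ chiL K g ∧ z = ⁅chiι K g x, ⁅ℓ, chiψ K g y⁆⁆ }

end WeakCommutativity


section Abstract2


variable {K : Type u} [CommRing K]
variable {L : Type v} [LieRing L] [LieAlgebra K L]
variable {X : Type w} [LieRing X] [LieAlgebra K X]

theorem skew_of_diag (f p : L →ₗ⁅K⁆ X) (H : ∀ x, ⁅f x, p x⁆ = 0) (x y : L) :
    ⁅f x, p y⁆ = -⁅f y, p x⁆ := by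
  have h := H (x + y)
  rw [map_add, map_add, add_lie, lie_add, lie_add, H x, H y, zero_add, add_zero] at h
  exact eq_neg_of_add_eq_zero_left h


theorem pair_gen_induction {K : Type u} [CommRing K] {L : Type v} [LieRing L] [LieAlgebra K L]
    (a b : L) (hgen : LieSubalgebra.lieSpan K L {a, b} = ⊤) (P : L → Prop)
    (ha : P a) (hb : P b) (h0 : P 0)
    (hsmul : ∀ (c : K) (x : L), P x → P (c • x))
    (hadd : ∀ x y : L, P x → P y → P (x + y))
    (hlie : ∀ x y : L, P x → P y → P ⁅x, y⁆) : ∀ x, P x := by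
  intro x
  let S : LieSubalgebra K L :=
    { carrier := {x | P x}
      add_mem' := fun {u v} hu hv => hadd u v hu hv
      zero_mem' := h0
      smul_mem' := fun c {x} hx => hsmul c x hx
      lie_mem' := fun {u v} hu hv => hlie u v hu hv }
  have hle : LieSubalgebra.lieSpan K L {a, b} ≤ S := by
    rw [LieSubalgebra.lieSpan_le]
    rintro x (rfl | rfl)
    exacts [ha, hb]
  have hx : x ∈ LieSubalgebra.lieSpan K L {a, b} := by rw [hgen]; trivial
  exact hle hx

theorem T_abstract (f p : L →ₗ⁅K⁆ X) (H : ∀ x, ⁅f x, p x⁆ = 0)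
    (a b : L) (hgen : LieSubalgebra.lieSpan K L {a, b} = ⊤) :
    ∀ x y z : L, ⁅f x, ⁅f y - p y, p z⁆⁆ = 0 := by
  set T : L → L → L → X := fun x y z => ⁅f x, ⁅f y - p y, p z⁆⁆ with hT
  have hsk : ∀ x y, ⁅f x, p y⁆ = -⁅f y, p x⁆ := skew_of_diag f p H
  -- linearity
  have hTadd1 : ∀ x x' y z, T (x + x') y z = T x y z + T x' y z := by
    intro x x' y z; simp only [hT]; rw [map_add, add_lie]
  have hTsmul1 : ∀ (c : K) (x y z), T (c • x) y z = c • T x y z := by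
    intro c x y z; simp only [hT]; rw [map_smul, smul_lie]
  have hTadd2 : ∀ x y y' z, T x (y + y') z = T x y z + T x y' z := by
    intro x y y' z; simp only [hT]
    rw [map_add, map_add, add_sub_add_comm, add_lie, lie_add]
  have hTsmul2 : ∀ (c : K) (x y z), T x (c • y) z = c • T x y z := by
    intro c x y z; simp only [hT]
    rw [map_smul, map_smul, ← smul_sub, smul_lie, lie_smul]
  have hTadd3 : ∀ x y z z', T x y (z + z') = T x y z + T x y z' := by
    intro x y z z'; simp only [hT]; rw [map_add, lie_add, lie_add]
  have hTsmul3 : ∀ (c : K) (x y z), T x y (c • z) = c • T x y z := by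
    intro c x y z; simp only [hT]; rw [map_smul, lie_smul, lie_smul]
  have hTzero1 : ∀ y z, T 0 y z = 0 := by
    intro y z; simp only [hT]; rw [map_zero, zero_lie]
  have hTzero2 : ∀ x z, T x 0 z = 0 := by
    intro x z; simp only [hT]; rw [map_zero, map_zero, sub_zero, zero_lie, lie_zero]
  have hTzero3 : ∀ x y, T x y 0 = 0 := by
    intro x y; simp only [hT]; rw [map_zero, lie_zero, lie_zero]
  -- diagonal vanishing
  have hd23 : ∀ x y, T x y y = 0 := by
    intro x y
    have h : ⁅f y - p y, p y⁆ = 0 := by rw [sub_lie, H y, lie_self, sub_zero]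
    simp only [hT]; rw [h, lie_zero]
  have hd13 : ∀ x y, T x y x = 0 := by
    intro x y
    have h1 : ⁅f x, ⁅f y, p x⁆⁆ = ⁅f ⁅x, y⁆, p x⁆ := by
      rw [leibniz_lie, H x, lie_zero, add_zero, ← LieHom.map_lie]
    have h2 : ⁅f x, ⁅p y, p x⁆⁆ = ⁅f ⁅x, y⁆, p x⁆ := by
      rw [← LieHom.map_lie, hsk x ⁅y, x⁆, ← lie_skew y x, map_neg, neg_lie, neg_neg]
    simp only [hT]; rw [sub_lie, lie_sub, h1, h2, sub_self]
  have hd12 : ∀ x z, T x x z = 0 := by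
    intro x z
    have h2 : ⁅f x, ⁅p x, p z⁆⁆ = ⁅f x, ⁅f x, p z⁆⁆ := by
      rw [← LieHom.map_lie, hsk x ⁅x, z⁆, LieHom.map_lie, lie_lie, H x, lie_zero, sub_zero,
        hsk z x, lie_neg, neg_neg]
    simp only [hT]; rw [sub_lie, lie_sub, h2, sub_self]
  -- antisymmetry by polarisation
  have ha12 : ∀ x y z, T x y z = -T y x z := by
    intro x y z
    have h := hd12 (x + y) z
    rw [hTadd1, hTadd2, hTadd2, hd12, hd12, zero_add, add_zero] at h
    exact eq_neg_of_add_eq_zero_left h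
  have ha13 : ∀ x y z, T x y z = -T z y x := by
    intro x y z
    have h := hd13 (x + z) y
    rw [hTadd1, hTadd3, hTadd3, hd13, hd13, zero_add, add_zero] at h
    exact eq_neg_of_add_eq_zero_left h
  -- Jacobi reduction in the first slot
  have hjac : ∀ u v y z, T ⁅u, v⁆ y z = ⁅f u, T v y z⁆ - ⁅f v, T u y z⁆ := by
    intro u v y z
    simp only [hT]; rw [LieHom.map_lie, lie_lie]
  -- base cases on {a, b}
  have hbase : ∀ x ∈ ({a, b} : Set L), ∀ y ∈ ({a, b} : Set L), ∀ z ∈ ({a, b} : Set L),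
      T x y z = 0 := by
    rintro x (rfl | rfl) y (rfl | rfl) z (rfl | rfl) <;>
      first
        | exact hd12 _ _
        | exact hd23 _ _
        | exact hd13 _ _
  -- first slot induction
  have step1 : ∀ y z, T a y z = 0 → T b y z = 0 → ∀ x, T x y z = 0 := by
    intro y z ha' hb' x
    have hx : x ∈ LieSubalgebra.lieSpan K L {a, b} := by rw [hgen]; trivial
    exact pair_gen_induction a b hgen (fun x => T x y z = 0) ha' hb' (hTzero1 y z)
      (fun c x hx' => by show T (c • x) y z = 0; rw [hTsmul1, show T x y z = 0 from hx', smul_zero])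
      (fun u v hu hv => by show T (u + v) y z = 0; rw [hTadd1, show T u y z = 0 from hu, show T v y z = 0 from hv, add_zero])
      (fun u v hu hv => by show T ⁅u, v⁆ y z = 0; rw [hjac, show T u y z = 0 from hu, show T v y z = 0 from hv, lie_zero, lie_zero, sub_zero]) x
  -- second slot induction
  have step2 : ∀ z, (∀ x, T x a z = 0) → (∀ x, T x b z = 0) → ∀ x y, T x y z = 0 := by
    intro z ha' hb' x y
    exact pair_gen_induction a b hgen (fun y => ∀ x, T x y z = 0) ha' hb'
      (fun x => hTzero2 x z)
      (fun c y hy' x => by show T x (c • y) z = 0; rw [hTsmul2, hy' x, smul_zero])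
      (fun u v hu hv x => by show T x (u + v) z = 0; rw [hTadd2, hu x, hv x, add_zero])
      (fun u v hu hv x => by
        show T x ⁅u, v⁆ z = 0
        have h2 : T v x z = 0 := by rw [ha12 v x z, hv x, neg_zero]
        have h3 : T u x z = 0 := by rw [ha12 u x z, hu x, neg_zero]
        rw [ha12 x ⁅u, v⁆ z, hjac, h2, h3, lie_zero, lie_zero, sub_zero, neg_zero]) y x
  -- third slot induction
  have step3 : (∀ x y, T x y a = 0) → (∀ x y, T x y b = 0) → ∀ x y z, T x y z = 0 := by
    intro ha' hb' x y z
    exact pair_gen_induction a b hgen (fun z => ∀ x y, T x y z = 0) ha' hb'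
      (fun x y => hTzero3 x y)
      (fun c z hz' x y => by show T x y (c • z) = 0; rw [hTsmul3, hz' x y, smul_zero])
      (fun u v hu hv x y => by show T x y (u + v) = 0; rw [hTadd3, hu x y, hv x y, add_zero])
      (fun u v hu hv x y => by
        show T x y ⁅u, v⁆ = 0
        have h2 : T v y x = 0 := by rw [ha13 v y x, hv x y, neg_zero]
        have h3 : T u y x = 0 := by rw [ha13 u y x, hu x y, neg_zero]
        rw [ha13 x y ⁅u, v⁆, hjac, h2, h3, lie_zero, lie_zero, sub_zero, neg_zero]) z x y
  -- assemble
  have hmem : a ∈ ({a, b} : Set L) := Set.mem_insert a {b}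
  have hmem' : b ∈ ({a, b} : Set L) := Set.mem_insert_iff.mpr (Or.inr rfl)
  have h2 : ∀ z ∈ ({a, b} : Set L), ∀ x y, T x y z = 0 := by
    intro z hzm
    refine step2 z ?_ ?_
    · exact fun x => step1 a z (hbase a hmem a hmem z hzm) (hbase b hmem' a hmem z hzm) x
    · exact fun x => step1 b z (hbase a hmem b hmem' z hzm) (hbase b hmem' b hmem' z hzm) x
  exact step3 (h2 a hmem) (h2 b hmem')


theorem set_gen_induction {K : Type u} [CommRing K] {L : Type v} [LieRing L] [LieAlgebra K L]
    (s : Set L) (hgen : LieSubalgebra.lieSpan K L s = ⊤) (P : L → Prop)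
    (hs : ∀ x ∈ s, P x) (h0 : P 0)
    (hsmul : ∀ (c : K) (x : L), P x → P (c • x))
    (hadd : ∀ x y : L, P x → P y → P (x + y))
    (hlie : ∀ x y : L, P x → P y → P ⁅x, y⁆) : ∀ x, P x := by
  intro x
  let S : LieSubalgebra K L :=
    { carrier := {x | P x}
      add_mem' := fun {u v} hu hv => hadd u v hu hv
      zero_mem' := h0
      smul_mem' := fun c {x} hx => hsmul c x hx
      lie_mem' := fun {u v} hu hv => hlie u v hu hv }
  have hle : LieSubalgebra.lieSpan K L s ≤ S := by
    rw [LieSubalgebra.lieSpan_le]; exact hs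
  have hx : x ∈ LieSubalgebra.lieSpan K L s := by rw [hgen]; trivial
  exact hle hx

end Abstract2

section ChiInfra

variable (K : Type u) [Field K] (g : Type v) [LieRing g] [LieAlgebra K g]

theorem chi_rel_zero {z : FreeLieAlgebra K (g ⊕ g)} (hz : z ∈ chiRelators K g) :
    (LieSubmodule.Quotient.mk (N := chiIdeal K g) z : chi K g) = 0 :=
  (LieSubmodule.Quotient.mk_eq_zero').mpr (LieSubmodule.subset_lieSpan hz)


theorem chi_mk_sub (u v : FreeLieAlgebra K (g ⊕ g)) :
    (LieSubmodule.Quotient.mk (N := chiIdeal K g) (u - v) : chi K g) =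
      LieSubmodule.Quotient.mk (N := chiIdeal K g) u -
        LieSubmodule.Quotient.mk (N := chiIdeal K g) v :=
  Submodule.Quotient.mk_sub _

theorem chi_mk_smul (c : K) (u : FreeLieAlgebra K (g ⊕ g)) :
    (LieSubmodule.Quotient.mk (N := chiIdeal K g) (c • u) : chi K g) =
      c • LieSubmodule.Quotient.mk (N := chiIdeal K g) u :=
  Submodule.Quotient.mk_smul _ _ _

/-- The first copy of `g` in `χ(g)`, as a Lie algebra homomorphism. -/
noncomputable def chiιHom : g →ₗ⁅K⁆ chi K g where
  toFun := chiι K g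
  map_add' x y := by
    have h := chi_rel_zero K g (Or.inl ⟨x, y, rfl⟩)
    rw [chi_mk_sub, chi_mk_sub, sub_sub, sub_eq_zero] at h
    exact h
  map_smul' c x := by
    have h := chi_rel_zero K g (Or.inr (Or.inl ⟨c, x, rfl⟩))
    rw [chi_mk_sub, chi_mk_smul, sub_eq_zero] at h
    exact h
  map_lie' {x y} := by
    have h := chi_rel_zero K g (Or.inr (Or.inr (Or.inl ⟨x, y, rfl⟩)))
    rw [chi_mk_sub, sub_eq_zero] at h
    exact h

/-- The second copy of `g` in `χ(g)`, as a Lie algebra homomorphism. -/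
noncomputable def chiψHom : g →ₗ⁅K⁆ chi K g where
  toFun := chiψ K g
  map_add' x y := by
    have h := chi_rel_zero K g (Or.inr (Or.inr (Or.inr (Or.inl ⟨x, y, rfl⟩))))
    rw [chi_mk_sub, chi_mk_sub, sub_sub, sub_eq_zero] at h
    exact h
  map_smul' c x := by
    have h := chi_rel_zero K g (Or.inr (Or.inr (Or.inr (Or.inr (Or.inl ⟨c, x, rfl⟩)))))
    rw [chi_mk_sub, chi_mk_smul, sub_eq_zero] at h
    exact h
  map_lie' {x y} := by
    have h := chi_rel_zero K g
      (Or.inr (Or.inr (Or.inr (Or.inr (Or.inr (Or.inl ⟨x, y, rfl⟩))))))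
    rw [chi_mk_sub, sub_eq_zero] at h
    exact h

theorem chi_wc (x : g) : ⁅chiιHom K g x, chiψHom K g x⁆ = 0 :=
  chi_rel_zero K g (Or.inr (Or.inr (Or.inr (Or.inr (Or.inr (Or.inr ⟨x, rfl⟩))))))

/-- The quotient map as a Lie algebra homomorphism. -/
noncomputable def chiMkHom : FreeLieAlgebra K (g ⊕ g) →ₗ⁅K⁆ chi K g :=
  { (chiIdeal K g).toSubmodule.mkQ with
    map_lie' := rfl }

theorem chi_gen : LieSubalgebra.lieSpan K (chi K g)
    (Set.range (chiιHom K g) ∪ Set.range (chiψHom K g)) = ⊤ := by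
  rw [eq_top_iff]
  intro z _
  obtain ⟨w, rfl⟩ := Submodule.Quotient.mk_surjective (chiIdeal K g).toSubmodule z
  set A := LieSubalgebra.lieSpan K (chi K g)
    (Set.range (chiιHom K g) ∪ Set.range (chiψHom K g)) with hA
  let F : g ⊕ g → A := Sum.elim
    (fun x => ⟨chiιHom K g x, LieSubalgebra.subset_lieSpan (Or.inl ⟨x, rfl⟩)⟩)
    (fun x => ⟨chiψHom K g x, LieSubalgebra.subset_lieSpan (Or.inr ⟨x, rfl⟩)⟩)
  let lft := FreeLieAlgebra.lift K F
  have key : A.incl.comp lft = chiMkHom K g := by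
    apply FreeLieAlgebra.hom_ext
    rintro (x | x) <;>
      simp only [LieHom.coe_comp, Function.comp_apply, FreeLieAlgebra.lift_of_apply,
        lft, F, Sum.elim_inl, Sum.elim_inr] <;> rfl
  have hmem : (A.incl.comp lft) w ∈ A := by
    simp only [LieHom.coe_comp, Function.comp_apply]
    exact (lft w).2
  rw [key] at hmem
  exact hmem

end ChiInfra

/-- If the Lie algebra `g` can be generated by two elements, then
`R(g) = 0`. -/
theorem chi_R_eq_bot_of_two_generated
    (K : Type u) [Field K] (hchar : ringChar K ≠ 2)
    (g : Type v) [LieRing g] [LieAlgebra K g]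
    (hgen : ∃ a b : g, LieSubalgebra.lieSpan K g {a, b} = ⊤) :
    chiR K g = ⊥ := by
  obtain ⟨a, b, hgen⟩ := hgen
  set f := chiιHom K g with hf
  set p := chiψHom K g with hp
  have hwc : ∀ x, ⁅f x, p x⁆ = 0 := chi_wc K g
  have hwc' : ∀ x, ⁅p x, f x⁆ = 0 := fun x => by
    rw [← lie_skew, hwc x, neg_zero]
  have hsk : ∀ x y, ⁅f x, p y⁆ = -⁅f y, p x⁆ := skew_of_diag f p hwc
  have TA : ∀ x c y, ⁅f x, ⁅f c - p c, p y⁆⁆ = 0 := T_abstract f p hwc a b hgen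
  have TB0 : ∀ x c y, ⁅p x, ⁅p c - f c, f y⁆⁆ = 0 := T_abstract p f hwc' a b hgen
  have TB : ∀ x c y, ⁅p x, ⁅f c - p c, f y⁆⁆ = 0 := by
    intro x c y
    have h := TB0 x c y
    rw [← neg_sub (f c) (p c), neg_lie, lie_neg, neg_eq_zero] at h
    exact h
  -- notation
  set l : g → chi K g := fun c => f c - p c with hldef
  set d : g → g → chi K g := fun c y => ⁅l c, p y⁆ with hddef
  -- basic identities
  have hCa : ∀ c y, ⁅p c, f y⁆ = ⁅f c, p y⁆ := by
    intro c y
    have h1 : -⁅p c, f y⁆ = ⁅f y, p c⁆ := lie_skew _ _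
    rw [hsk y c] at h1
    exact neg_inj.mp h1
  have hdexp : ∀ c y, d c y = ⁅f c, p y⁆ - p ⁅c, y⁆ := by
    intro c y
    show ⁅f c - p c, p y⁆ = _
    rw [sub_lie, ← LieHom.map_lie]
  have hlf : ∀ c y, ⁅l c, f y⁆ = l ⁅c, y⁆ - d c y := by
    intro c y
    show ⁅f c - p c, f y⁆ = (f ⁅c, y⁆ - p ⁅c, y⁆) - d c y
    rw [hdexp c y, sub_lie, hCa c y, ← LieHom.map_lie]
    abel
  have hdeq : ∀ c y, d c y = l ⁅c, y⁆ - ⁅l c, f y⁆ := by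
    intro c y
    rw [hlf c y]
    abel
  have hS : ∀ c z w, ⁅d c z, p w⁆ = d ⁅c, z⁆ w := by
    intro c z w
    have h0 : ⁅p w, ⁅l c, f z⁆⁆ = 0 := TB w c z
    have h1 : ⁅⁅l c, f z⁆, p w⁆ = 0 := by
      rw [← neg_eq_zero, lie_skew, h0]
    rw [hdeq c z, sub_lie, h1, sub_zero]
  have hpl : ∀ y c, ⁅p y, l c⁆ = d y c := by
    intro y c
    show ⁅p y, f c - p c⁆ = d y c
    rw [hdexp y c, lie_sub, hCa y c, ← LieHom.map_lie]
  have hpd : ∀ u c y, ⁅p u, d c y⁆ = d ⁅u, c⁆ y + d c ⁅u, y⁆ := by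
    intro u c y
    show ⁅p u, ⁅l c, p y⁆⁆ = _
    rw [leibniz_lie, hpl u c, hS u c y, ← LieHom.map_lie]
  have hfd : ∀ x c y, ⁅f x, d c y⁆ = 0 := fun x c y => TA x c y
  have hfl : ∀ x c, ⁅f x, l c⁆ = l ⁅x, c⁆ - d x c := by
    intro x c
    show ⁅f x, f c - p c⁆ = (f ⁅x, c⁆ - p ⁅x, c⁆) - d x c
    rw [hdexp x c, lie_sub, ← LieHom.map_lie]
    abel
  -- the submodules
  set Dset : Set (chi K g) := {w | ∃ c y, w = d c y} with hDset
  set M : Submodule K (chi K g) := Submodule.span K Dset with hM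
  set L0 : Submodule K (chi K g) := Submodule.span K (Set.range l ∪ Dset) with hL0
  have hdM : ∀ c y, d c y ∈ M := fun c y => Submodule.subset_span ⟨c, y, rfl⟩
  have hlL0 : ∀ c, l c ∈ L0 := fun c => Submodule.subset_span (Or.inl ⟨c, rfl⟩)
  have hdL0 : ∀ c y, d c y ∈ L0 := fun c y => Submodule.subset_span (Or.inr ⟨c, y, rfl⟩)
  have hfM : ∀ (x : g), ∀ w ∈ M, ⁅f x, w⁆ = 0 := by
    intro x w hw
    refine Submodule.span_induction (p := fun w _ => ⁅f x, w⁆ = 0) ?_ ?_ ?_ ?_ hw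
    · rintro w ⟨c, y, rfl⟩; exact hfd x c y
    · show ⁅f x, (0 : chi K g)⁆ = 0; exact lie_zero _
    · intro u v _ _ hu hv
      show ⁅f x, u + v⁆ = 0
      rw [lie_add, show ⁅f x, u⁆ = 0 from hu, show ⁅f x, v⁆ = 0 from hv, add_zero]
    · intro c u _ hu
      show ⁅f x, c • u⁆ = 0
      rw [lie_smul, show ⁅f x, u⁆ = 0 from hu, smul_zero]
  have hpM : ∀ (u : g), ∀ w ∈ M, ⁅p u, w⁆ ∈ M := by
    intro u w hw
    refine Submodule.span_induction (p := fun w _ => ⁅p u, w⁆ ∈ M) ?_ ?_ ?_ ?_ hw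
    · rintro w ⟨c, y, rfl⟩
      show ⁅p u, d c y⁆ ∈ M
      rw [hpd u c y]
      exact add_mem (hdM _ _) (hdM _ _)
    · show ⁅p u, (0 : chi K g)⁆ ∈ M
      rw [lie_zero]; exact zero_mem M
    · intro w₁ w₂ _ _ h1 h2
      show ⁅p u, w₁ + w₂⁆ ∈ M
      rw [lie_add]; exact add_mem h1 h2
    · intro c w₁ _ h1
      show ⁅p u, c • w₁⁆ ∈ M
      rw [lie_smul]; exact Submodule.smul_mem M c h1
  have hML0 : M ≤ L0 := Submodule.span_mono Set.subset_union_right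
  have hfL0 : ∀ (x : g), ∀ w ∈ L0, ⁅f x, w⁆ ∈ L0 := by
    intro x w hw
    refine Submodule.span_induction (p := fun w _ => ⁅f x, w⁆ ∈ L0) ?_ ?_ ?_ ?_ hw
    · rintro w (⟨c, rfl⟩ | ⟨c, y, rfl⟩)
      · show ⁅f x, l c⁆ ∈ L0
        rw [hfl x c]; exact sub_mem (hlL0 _) (hdL0 _ _)
      · show ⁅f x, d c y⁆ ∈ L0
        rw [hfd x c y]; exact zero_mem L0
    · show ⁅f x, (0 : chi K g)⁆ ∈ L0
      rw [lie_zero]; exact zero_mem L0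
    · intro w₁ w₂ _ _ h1 h2
      show ⁅f x, w₁ + w₂⁆ ∈ L0
      rw [lie_add]; exact add_mem h1 h2
    · intro c w₁ _ h1
      show ⁅f x, c • w₁⁆ ∈ L0
      rw [lie_smul]; exact Submodule.smul_mem L0 c h1
  have hpL0 : ∀ (u : g), ∀ w ∈ L0, ⁅p u, w⁆ ∈ L0 := by
    intro u w hw
    refine Submodule.span_induction (p := fun w _ => ⁅p u, w⁆ ∈ L0) ?_ ?_ ?_ ?_ hw
    · rintro w (⟨c, rfl⟩ | ⟨c, y, rfl⟩)
      · show ⁅p u, l c⁆ ∈ L0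
        rw [hpl u c]; exact hdL0 _ _
      · show ⁅p u, d c y⁆ ∈ L0
        rw [hpd u c y]; exact add_mem (hdL0 _ _) (hdL0 _ _)
    · show ⁅p u, (0 : chi K g)⁆ ∈ L0
      rw [lie_zero]; exact zero_mem L0
    · intro w₁ w₂ _ _ h1 h2
      show ⁅p u, w₁ + w₂⁆ ∈ L0
      rw [lie_add]; exact add_mem h1 h2
    · intro c w₁ _ h1
      show ⁅p u, c • w₁⁆ ∈ L0
      rw [lie_smul]; exact Submodule.smul_mem L0 c h1
  have hall : ∀ (u : chi K g), ∀ w ∈ L0, ⁅u, w⁆ ∈ L0 := by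
    refine set_gen_induction _ (chi_gen K g) (fun u => ∀ w ∈ L0, ⁅u, w⁆ ∈ L0) ?_ ?_ ?_ ?_ ?_
    · rintro u (⟨x, rfl⟩ | ⟨y, rfl⟩)
      · exact hfL0 x
      · exact hpL0 y
    · intro w hw; rw [zero_lie]; exact zero_mem L0
    · intro c u hu w hw; rw [smul_lie]; exact Submodule.smul_mem L0 c (hu w hw)
    · intro u v hu hv w hw; rw [add_lie]; exact add_mem (hu w hw) (hv w hw)
    · intro u v hu hv w hw
      rw [lie_lie]
      exact sub_mem (hu _ (hv w hw)) (hv _ (hu w hw))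
  let I0 : LieIdeal K (chi K g) := ⟨L0, fun {x m} hm => hall x m hm⟩
  have hLle : chiL K g ≤ I0 := by
    rw [chiL, LieSubmodule.lieSpan_le]
    rintro w ⟨c, rfl⟩
    exact hlL0 c
  have hbr : ∀ ℓ ∈ L0, ∀ y, ⁅ℓ, p y⁆ ∈ M := by
    intro ℓ hℓ
    refine Submodule.span_induction (p := fun ℓ _ => ∀ y, ⁅ℓ, p y⁆ ∈ M) ?_ ?_ ?_ ?_ hℓ
    · rintro w (⟨c, rfl⟩ | ⟨c, z, rfl⟩) y
      · exact hdM c y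
      · show ⁅d c z, p y⁆ ∈ M
        rw [hS c z y]; exact hdM _ _
    · intro y
      show ⁅(0 : chi K g), p y⁆ ∈ M
      rw [zero_lie]; exact zero_mem M
    · intro w₁ w₂ _ _ h1 h2 y
      show ⁅w₁ + w₂, p y⁆ ∈ M
      rw [add_lie]; exact add_mem (h1 y) (h2 y)
    · intro c w₁ _ h1 y
      show ⁅c • w₁, p y⁆ ∈ M
      rw [smul_lie]; exact Submodule.smul_mem M c (h1 y)
  rw [chiR]
  rw [LieSubmodule.lieSpan_eq_bot_iff]
  rintro m ⟨x, y, ℓ, hℓ, rfl⟩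
  have h1 : ℓ ∈ L0 := hLle hℓ
  have h2 : ⁅ℓ, p y⁆ ∈ M := hbr ℓ h1 y
  exact hfM x _ h2
end
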